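/- arXiv:1907.06140 — 5 statements merged into one kernel-verified Lean document; each statement's English description precedes it below -/
import Mathlib

section
/- Let x̄ be a locally extremal point of the system {Ω₁,…,Ωₛ} (s ≥ 2) of nonempty subsets of ℝⁿ, each locally closed around their common point x̄. Then there exist vectors vᵢ ∈ N(x̄;Ωᵢ) for i = 1,…,s, not all equal to zero, satisfying the generalized Euler equation v₁ + … + vₛ = 0. -/
open Filter Topology RealInnerProductSpace

noncomputable section

/-- Inner pairing on a product space (sum of the componentwise pairings). -/
instance prodInnerAux {E F : Type*} [Inner ℝ E] [Inner ℝ F] : Inner ℝ (E × F) :=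
  ⟨fun p q => inner ℝ p.1 q.1 + inner ℝ p.2 q.2⟩

variable {E Y : Type*}

/-- The prenormal (Fréchet/regular) cone `N̂(x; Ω)`:
`v ∈ N̂(x;Ω)` iff `limsup_{u →_Ω x} ⟨v, u - x⟩ / ‖u - x‖ ≤ 0`. -/
def preNC [NormedAddCommGroup E] [Inner ℝ E] (Ω : Set E) (x : E) : Set E :=
  {v | ∀ ε : ℝ, 0 < ε → ∃ δ : ℝ, 0 < δ ∧
      ∀ u ∈ Ω, ‖u - x‖ < δ → ⟪v, u - x⟫ ≤ ε * ‖u - x‖}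

/-- The basic/limiting (Mordukhovich) normal cone `N(x̄; Ω)`, obtained as the
sequential outer limit of prenormal cones at points of `Ω` converging to `x̄`. -/
def limNC [NormedAddCommGroup E] [Inner ℝ E] (Ω : Set E) (x : E) : Set E :=
  {v | ∃ xs vs : ℕ → E, (∀ k, xs k ∈ Ω) ∧ (∀ k, vs k ∈ preNC Ω (xs k)) ∧
      Tendsto xs atTop (𝓝 x) ∧ Tendsto vs atTop (𝓝 v)}

/-- Epigraph of an extended-real-valued function. -/
def epiF (φ : E → EReal) : Set (E × ℝ) := {p | φ p.1 ≤ (p.2 : EReal)}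

/-- The basic (limiting, Mordukhovich) subdifferential `∂φ(x)`. -/
def basicSubdiff [NormedAddCommGroup E] [Inner ℝ E] (φ : E → EReal) (x : E) : Set E :=
  {v | ((v, (-1 : ℝ)) : E × ℝ) ∈ limNC (epiF φ) (x, (φ x).toReal)}

/-- The singular subdifferential `∂^∞φ(x)`. -/
def singSubdiff [NormedAddCommGroup E] [Inner ℝ E] (φ : E → EReal) (x : E) : Set E :=
  {v | ((v, (0 : ℝ)) : E × ℝ) ∈ limNC (epiF φ) (x, (φ x).toReal)}

/-- Basic subdifferential of a real-valued function. -/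
def basicSubdiffR [NormedAddCommGroup E] [Inner ℝ E] (φ : E → ℝ) (x : E) : Set E :=
  basicSubdiff (fun u => ((φ u : ℝ) : EReal)) x

/-- The regular (Fréchet) subdifferential `∂̂φ(x)`:
`v ∈ ∂̂φ(x)` iff `liminf_{u → x} (φ(u) - φ(x) - ⟨v, u - x⟩)/‖u - x‖ ≥ 0`. -/
def regSubdiff [NormedAddCommGroup E] [Inner ℝ E] (φ : E → EReal) (x : E) : Set E :=
  {v | ∀ ε : ℝ, 0 < ε → ∃ δ : ℝ, 0 < δ ∧ ∀ u : E, ‖u - x‖ < δ →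
      ((((φ x).toReal + ⟪v, u - x⟫ - ε * ‖u - x‖ : ℝ)) : EReal) ≤ φ u}

/-- Regular subdifferential of a real-valued function. -/
def regSubdiffR [NormedAddCommGroup E] [Inner ℝ E] (φ : E → ℝ) (x : E) : Set E :=
  regSubdiff (fun u => ((φ u : ℝ) : EReal)) x

/-- Graph of a set-valued mapping. -/
def gphF (F : E → Set Y) : Set (E × Y) := {p | p.2 ∈ F p.1}

/-- The coderivative `D*F(x̄,ȳ)(w) = {v : (v, -w) ∈ N((x̄,ȳ); gph F)}`. -/
def coderiv [NormedAddCommGroup E] [Inner ℝ E] [NormedAddCommGroup Y] [Inner ℝ Y]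
    (F : E → Set Y) (x : E) (y : Y) (w : Y) : Set E :=
  {v | ((v, -w) : E × Y) ∈ limNC (gphF F) (x, y)}

/-- A set is locally closed around a point. -/
def LocallyClosedAt [TopologicalSpace E] (Ω : Set E) (x : E) : Prop :=
  ∃ U ∈ 𝓝 x, IsClosed (Ω ∩ U)

/-- A real-valued function is Lipschitz continuous around a point. -/
def LipschitzAround [NormedAddCommGroup E] (φ : E → ℝ) (x : E) : Prop :=
  ∃ (L : ℝ) (U : Set E), U ∈ 𝓝 x ∧ ∀ u ∈ U, ∀ w ∈ U, |φ u - φ w| ≤ L * ‖u - w‖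

/-- An extended-real-valued function is lower semicontinuous around a point. -/
def LscAround [TopologicalSpace E] (φ : E → EReal) (x : E) : Prop :=
  ∃ U ∈ 𝓝 x, LowerSemicontinuousOn φ U

/-- Inner semicontinuity of a set-valued mapping at a point of its graph. -/
def InnerSemicontAt [TopologicalSpace E] [TopologicalSpace Y]
    (M : E → Set Y) (x : E) (y : Y) : Prop :=
  ∀ xs : ℕ → E, Tendsto xs atTop (𝓝 x) → (∀ k, (M (xs k)).Nonempty) →
    ∃ ys : ℕ → Y, (∀ k, ys k ∈ M (xs k)) ∧ Tendsto ys atTop (𝓝 y)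

/-- The Lipschitz-like (Aubin) property of a set-valued mapping around a graph point. -/
def LipschitzLike [NormedAddCommGroup E] [NormedAddCommGroup Y]
    (F : E → Set Y) (x : E) (y : Y) : Prop :=
  ∃ (U : Set E) (V : Set Y) (ℓ : ℝ), U ∈ 𝓝 x ∧ V ∈ 𝓝 y ∧ 0 ≤ ℓ ∧
    ∀ a ∈ U, ∀ b ∈ U, ∀ z ∈ F a ∩ V, ∃ z' ∈ F b, ‖z - z'‖ ≤ ℓ * ‖a - b‖

/-- The optimal value (marginal) function `ϑ(x) = inf{φ(x,y) : y ∈ F(x)}`. -/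
def valueFn (φ : E × Y → ℝ) (F : E → Set Y) (x : E) : EReal :=
  sInf ((fun y => ((φ (x, y) : ℝ) : EReal)) '' F x)

/-- The argminimum mapping `M(x) = {y ∈ F(x) : φ(x,y) = ϑ(x)}`. -/
def argminMap (φ : E × Y → ℝ) (F : E → Set Y) (x : E) : Set Y :=
  {y | y ∈ F x ∧ ((φ (x, y) : ℝ) : EReal) = valueFn φ F x}


/-- Local extremality of a system of sets `{Ω i}` at a common point `x`:
there are a neighborhood `U` of `x` and sequences `a i k → 0` such that
`⋂ i (Ω i - a i k) ∩ U = ∅` for all `k`. -/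
def LocallyExtremalAt [NormedAddCommGroup E] {s : ℕ} (Ω : Fin s → Set E) (x : E) : Prop :=
  ∃ U ∈ 𝓝 x, ∃ a : Fin s → ℕ → E,
    (∀ i, Tendsto (a i) atTop (𝓝 0)) ∧
    ∀ k : ℕ, (⋂ i, (fun z => z + a i k) ⁻¹' Ω i) ∩ U = ∅

open scoped Classical in
/-- Extended-real-valued indicator function of a set (0 on the set, +∞ off it). -/
def indicatorE (Ω : Set E) (p : E) : EReal := if p ∈ Ω then 0 else ⊤

/-- Lower-level constraint mapping `F(x) = {y : fᵢ(x,y) ≤ 0, i = 1,…,r}`. -/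
def lowerF {r : ℕ} (f : Fin r → E × Y → ℝ) (x : E) : Set Y := {y | ∀ i, f i (x, y) ≤ 0}

/-- Feasibility in the single-level reformulation (P) of the optimistic bilevel program:
`gⱼ(x) ≤ 0`, `fᵢ(x,y) ≤ 0`, and `φ(x,y) ≤ ϑ(x)`. -/
def FeasibleP {r s : ℕ} (φ : E × Y → ℝ) (f : Fin r → E × Y → ℝ) (g : Fin s → E → ℝ)
    (x : E) (y : Y) : Prop :=
  (∀ j, g j x ≤ 0) ∧ (∀ i, f i (x, y) ≤ 0) ∧
    ((φ (x, y) : ℝ) : EReal) ≤ valueFn φ (lowerF f) x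

/-- `(x̄,ȳ)` is a local optimal solution to the single-level reformulation (P). -/
def LocalOptP [NormedAddCommGroup E] [NormedAddCommGroup Y] {r s : ℕ}
    (φ ψ : E × Y → ℝ) (f : Fin r → E × Y → ℝ) (g : Fin s → E → ℝ)
    (x : E) (y : Y) : Prop :=
  FeasibleP φ f g x y ∧
    ∃ U ∈ 𝓝 ((x, y) : E × Y), ∀ p ∈ U, FeasibleP φ f g p.1 p.2 → ψ (x, y) ≤ ψ p

/-- Partial calmness of (P) at a feasible point `(x̄,ȳ)` with constant `κ > 0`:
there is a neighborhood `U` of `(x̄,ȳ,0)` such that `ψ(x,y) - ψ(x̄,ȳ) + κ|ν| ≥ 0`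
for all `(x,y,ν) ∈ U` feasible to the perturbed problem. -/
def PartiallyCalm [NormedAddCommGroup E] [NormedAddCommGroup Y] {r s : ℕ}
    (φ ψ : E × Y → ℝ) (f : Fin r → E × Y → ℝ) (g : Fin s → E → ℝ)
    (x : E) (y : Y) (κ : ℝ) : Prop :=
  ∃ U ∈ 𝓝 ((x, y, (0 : ℝ)) : E × Y × ℝ), ∀ a ∈ U,
    (∀ j, g j a.1 ≤ 0) → (∀ i, f i (a.1, a.2.1) ≤ 0) →
    (((φ (a.1, a.2.1) + a.2.2 : ℝ) : EReal) = valueFn φ (lowerF f) a.1) →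
    ψ (x, y) ≤ ψ (a.1, a.2.1) + κ * |a.2.2|

/-- `(x̄,ȳ)` is a local optimal solution to the penalized problem:
minimize `ψ(x,y) + κ(φ(x,y) - ϑ(x))` subject to `gⱼ(x) ≤ 0`, `fᵢ(x,y) ≤ 0`. -/
def LocalOptPen [NormedAddCommGroup E] [NormedAddCommGroup Y] {r s : ℕ}
    (φ ψ : E × Y → ℝ) (f : Fin r → E × Y → ℝ) (g : Fin s → E → ℝ)
    (x : E) (y : Y) (κ : ℝ) : Prop :=
  ∃ U ∈ 𝓝 ((x, y) : E × Y), ∀ p ∈ U, (∀ j, g j p.1 ≤ 0) → (∀ i, f i p ≤ 0) →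
    ((ψ (x, y) : ℝ) : EReal) + (κ : EReal) * (((φ (x, y) : ℝ) : EReal) - valueFn φ (lowerF f) x)
      ≤ ((ψ p : ℝ) : EReal) + (κ : EReal) * (((φ p : ℝ) : EReal) - valueFn φ (lowerF f) p.1)

/-- Lower-level regularity (generalized MFCQ for the lower-level constraints) at `(x̄,ȳ)`. -/
def LowerLevelRegular [NormedAddCommGroup E] [Inner ℝ E]
    [NormedAddCommGroup Y] [NormedSpace ℝ Y] [Inner ℝ Y]
    {r : ℕ} (f : Fin r → E × Y → ℝ) (x : E) (y : Y) : Prop :=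
  ∀ (w : Fin r → E × Y) (l : Fin r → ℝ),
    (∀ i, f i (x, y) = 0 → w i ∈ basicSubdiffR (f i) (x, y)) →
    (∀ i, 0 ≤ l i) → (∀ i, f i (x, y) ≠ 0 → l i = 0) →
    ∑ i, l i • (w i).2 = 0 → ∀ i, l i = 0

/-- Upper-level regularity (generalized MFCQ for the upper-level constraints) at `x̄`. -/
def UpperLevelRegular [NormedAddCommGroup E] [NormedSpace ℝ E] [Inner ℝ E]
    {s : ℕ} (g : Fin s → E → ℝ) (x : E) : Prop :=
  ∀ (w : Fin s → E) (l : Fin s → ℝ),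
    (∀ j, g j x = 0 → w j ∈ basicSubdiffR (g j) x) →
    (∀ j, 0 ≤ l j) → (∀ j, g j x ≠ 0 → l j = 0) →
    ∑ j, l j • w j = 0 → ∀ j, l j = 0


section ExtremalPrincipleAux

variable {F : Type*} [NormedAddCommGroup F] [InnerProductSpace ℝ F]

lemma projection_preNC {C : Set F} {w p : F}
    (hproj : ∀ u ∈ C, ‖p - w‖ ≤ ‖p - u‖) {ν : ℝ} (hν : 0 < ν) :
    (ν⁻¹ : ℝ) • (p - w) ∈ preNC C w := by
  intro ε hε
  refine ⟨2 * ε * ν, by positivity, fun u hu hlt => ?_⟩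
  have h1 : ‖p - w‖ ≤ ‖p - u‖ := hproj u hu
  have h2 : ‖(p - w) - (u - w)‖ ^ 2 = ‖p - w‖ ^ 2 - 2 * ⟪p - w, u - w⟫ + ‖u - w‖ ^ 2 :=
    norm_sub_sq_real _ _
  have h3 : p - u = (p - w) - (u - w) := by abel
  have key : ⟪p - w, u - w⟫ ≤ ‖u - w‖ ^ 2 / 2 := by
    rw [← h3] at h2
    nlinarith [norm_nonneg (p - w), norm_nonneg (p - u)]
  have h4 : ⟪(ν⁻¹ : ℝ) • (p - w), u - w⟫ = ν⁻¹ * ⟪p - w, u - w⟫ :=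
    real_inner_smul_left _ _ _
  rw [h4]
  have hν' : (0:ℝ) < ν⁻¹ := by positivity
  have h5 : ν⁻¹ * ⟪p - w, u - w⟫ ≤ ν⁻¹ * (‖u - w‖ ^ 2 / 2) :=
    mul_le_mul_of_nonneg_left key hν'.le
  have h6 : ν⁻¹ * (‖u - w‖ ^ 2 / 2) ≤ ε * ‖u - w‖ := by
    rw [inv_mul_le_iff₀ hν]
    nlinarith [norm_nonneg (u - w)]
  linarith

lemma preNC_localize {Ω : Set F} {x w : F} {R : ℝ} (hw : ‖w - x‖ < R) {v : F}
    (hv : v ∈ preNC (Ω ∩ Metric.closedBall x R) w) : v ∈ preNC Ω w := by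
  intro ε hε
  obtain ⟨δ, hδ, h⟩ := hv ε hε
  refine ⟨min δ (R - ‖w - x‖), lt_min hδ (by linarith), fun u hu hlt => ?_⟩
  have h1 : ‖u - w‖ < δ := lt_of_lt_of_le hlt (min_le_left _ _)
  have h2 : u ∈ Metric.closedBall x R := by
    rw [Metric.mem_closedBall, dist_eq_norm]
    have e : u - x = (u - w) + (w - x) := by abel
    have := norm_add_le (u - w) (w - x)
    have hlt2 := lt_of_lt_of_le hlt (min_le_right _ _)
    rw [e]
    linarith
  exact h u ⟨hu, h2⟩ h1

end ExtremalPrincipleAux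

set_option maxHeartbeats 1000000 in
lemma core_lemma {n s : ℕ} (C : Fin s → Set (EuclideanSpace ℝ (Fin n)))
    (xbar : EuclideanSpace ℝ (Fin n)) {r η : ℝ} (hr : 0 < r) (hη : 0 < η)
    (hcl : ∀ i, IsClosed (C i)) (hxC : ∀ i, xbar ∈ C i)
    (a : Fin s → EuclideanSpace ℝ (Fin n)) (ha : ∀ i, ‖a i‖ ≤ η)
    (hγr : Real.sqrt s * η < r ^ 2)
    (hempty : ∀ x ∈ Metric.closedBall xbar r, ∃ i, x + a i ∉ C i) :
    ∃ w v : Fin s → EuclideanSpace ℝ (Fin n),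
      (∀ i, w i ∈ C i) ∧ (∀ i, v i ∈ preNC (C i) (w i)) ∧
      (∑ i, ‖v i‖ ^ 2 = 1) ∧
      ‖∑ i, v i‖ ≤ 2 * Real.sqrt (Real.sqrt s * η) ∧
      (∀ i, ‖w i - xbar‖ ≤ 2 * (Real.sqrt (Real.sqrt s * η) + η)) := by
  set γ := Real.sqrt s * η with hγdef
  have hγ0 : 0 ≤ γ := mul_nonneg (Real.sqrt_nonneg _) hη.le
  set φ : EuclideanSpace ℝ (Fin n) → ℝ := fun x =>
    Real.sqrt (∑ i, (Metric.infDist (x + a i) (C i)) ^ 2) + ‖x - xbar‖ ^ 2 with hφdef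
  have hφcont : Continuous φ := by
    apply Continuous.add
    · apply Real.continuous_sqrt.comp
      apply continuous_finset_sum
      intro i _
      exact ((Metric.continuous_infDist_pt (C i)).comp (continuous_id.add continuous_const)).pow 2
    · exact ((continuous_id.sub continuous_const).norm).pow 2
  obtain ⟨xs, hxsmem, hxsmin⟩ := (isCompact_closedBall xbar r).exists_isMinOn
    ⟨xbar, Metric.mem_closedBall_self hr.le⟩ hφcont.continuousOn
  have hφxbar : φ xbar ≤ γ := by
    have hsum_bound : ∑ i, (Metric.infDist (xbar + a i) (C i)) ^ 2 ≤ (s : ℝ) * η ^ 2 := by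
      have hterm : ∀ i, (Metric.infDist (xbar + a i) (C i)) ^ 2 ≤ η ^ 2 := by
        intro i
        have h1 : Metric.infDist (xbar + a i) (C i) ≤ ‖a i‖ := by
          have := Metric.infDist_le_dist_of_mem (x := xbar + a i) (hxC i)
          simpa [dist_eq_norm] using this
        have h2 : 0 ≤ Metric.infDist (xbar + a i) (C i) := Metric.infDist_nonneg
        nlinarith [ha i]
      calc ∑ i, (Metric.infDist (xbar + a i) (C i)) ^ 2 ≤ ∑ _i : Fin s, η ^ 2 :=
            Finset.sum_le_sum (fun i _ => hterm i)
        _ = (s : ℝ) * η ^ 2 := by simp [Finset.sum_const, mul_comm]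
    have h1 : Real.sqrt (∑ i, (Metric.infDist (xbar + a i) (C i)) ^ 2) ≤ Real.sqrt ((s:ℝ) * η ^ 2) :=
      Real.sqrt_le_sqrt hsum_bound
    have h2 : Real.sqrt ((s : ℝ) * η ^ 2) = Real.sqrt s * η := by
      rw [Real.sqrt_mul (by positivity), Real.sqrt_sq hη.le]
    have h3 : φ xbar = Real.sqrt (∑ i, (Metric.infDist (xbar + a i) (C i)) ^ 2) := by
      simp [hφdef]
    rw [h3, hγdef]; rw [h2] at h1; exact h1
  have hφxs : φ xs ≤ γ :=
    le_trans ((isMinOn_iff.mp hxsmin) xbar (Metric.mem_closedBall_self hr.le)) hφxbar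
  set D := ∑ i, (Metric.infDist (xs + a i) (C i)) ^ 2 with hDdef
  have hD0 : 0 ≤ D := Finset.sum_nonneg fun i _ => sq_nonneg _
  set ν := Real.sqrt D with hνdef
  have hν0 : 0 ≤ ν := Real.sqrt_nonneg _
  have hφxs_eq : φ xs = ν + ‖xs - xbar‖ ^ 2 := rfl
  have hνpos : 0 < ν := by
    rcases hν0.lt_or_eq with h | h
    · exact h
    · exfalso
      have hD : D = 0 := by
        have := Real.sqrt_eq_zero hD0 |>.mp h.symm
        exact this
      have hmem : ∀ i, xs + a i ∈ C i := by
        intro i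
        have hz : (Metric.infDist (xs + a i) (C i)) ^ 2 = 0 :=
          (Finset.sum_eq_zero_iff_of_nonneg (fun i _ => sq_nonneg _)).mp hD i (Finset.mem_univ i)
        have hz' : Metric.infDist (xs + a i) (C i) = 0 := by
          nlinarith [Metric.infDist_nonneg (s := C i) (x := xs + a i)]
        exact ((hcl i).mem_iff_infDist_zero ⟨xbar, hxC i⟩).mpr hz'
      obtain ⟨i, hi⟩ := hempty xs hxsmem
      exact hi (hmem i)
  have hDν : ν ^ 2 = D := Real.sq_sqrt hD0
  have hxsdist2 : ‖xs - xbar‖ ^ 2 ≤ γ := by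
    rw [hφxs_eq] at hφxs; linarith
  have hxsdist : ‖xs - xbar‖ ≤ Real.sqrt γ := by
    rw [← Real.sqrt_sq (norm_nonneg (xs - xbar))]
    exact Real.sqrt_le_sqrt hxsdist2
  have hsqγ : Real.sqrt γ < r := (Real.sqrt_lt' hr).mpr hγr
  have hproj : ∀ i, ∃ y ∈ C i, Metric.infDist (xs + a i) (C i) = dist (xs + a i) y :=
    fun i => (hcl i).exists_infDist_eq_dist ⟨xbar, hxC i⟩ _
  choose w hwC hwd using hproj
  set e : Fin s → EuclideanSpace ℝ (Fin n) := fun i => xs + a i - w i with hedef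
  have hne : ∀ i, ‖e i‖ = Metric.infDist (xs + a i) (C i) := fun i => by
    rw [hedef]; rw [hwd i, dist_eq_norm]
  have hsumeD : ∑ i, ‖e i‖ ^ 2 = D := by
    rw [hDdef]; exact Finset.sum_congr rfl fun i _ => by rw [hne i]
  set v : Fin s → EuclideanSpace ℝ (Fin n) := fun i => (ν⁻¹ : ℝ) • e i with hvdef
  have hsumv2 : ∑ i, ‖v i‖ ^ 2 = 1 := by
    have hvi : ∀ i, ‖v i‖ ^ 2 = ν⁻¹ ^ 2 * ‖e i‖ ^ 2 := fun i => by
      rw [hvdef]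
      simp only [norm_smul, Real.norm_eq_abs, mul_pow, sq_abs]
    rw [Finset.sum_congr rfl fun i _ => hvi i, ← Finset.mul_sum, hsumeD, ← hDν]
    field_simp
  have hvpre : ∀ i, v i ∈ preNC (C i) (w i) := by
    intro i
    have hp : ∀ u ∈ C i, ‖(xs + a i) - w i‖ ≤ ‖(xs + a i) - u‖ := fun u hu => by
      rw [← dist_eq_norm, ← dist_eq_norm, ← hwd i]
      exact Metric.infDist_le_dist_of_mem hu
    exact projection_preNC hp hνpos
  have hppoint : ∀ i, ‖xs + a i - xbar‖ ≤ Real.sqrt γ + η := by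
    intro i
    have he : xs + a i - xbar = (xs - xbar) + a i := by abel
    rw [he]
    calc ‖(xs - xbar) + a i‖ ≤ ‖xs - xbar‖ + ‖a i‖ := norm_add_le _ _
      _ ≤ Real.sqrt γ + η := add_le_add hxsdist (ha i)
  have hwbound : ∀ i, ‖w i - xbar‖ ≤ 2 * (Real.sqrt γ + η) := by
    intro i
    have h1 : ‖e i‖ ≤ ‖xs + a i - xbar‖ := by
      rw [hne i]
      have := Metric.infDist_le_dist_of_mem (x := xs + a i) (hxC i)
      rwa [dist_eq_norm] at this
    have h2 : ‖w i - xbar‖ ≤ ‖e i‖ + ‖xs + a i - xbar‖ := by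
      have he : w i - xbar = -(e i) + (xs + a i - xbar) := by rw [hedef]; dsimp only; abel
      rw [he]
      calc ‖-(e i) + (xs + a i - xbar)‖ ≤ ‖-(e i)‖ + ‖xs + a i - xbar‖ := norm_add_le _ _
        _ = ‖e i‖ + ‖xs + a i - xbar‖ := by rw [norm_neg]
    linarith [hppoint i]
  -- the key exactness step
  set S := (∑ i, v i) + (2 : ℝ) • (xs - xbar) with hSdef
  have hSE : ∑ i, v i = (ν⁻¹ : ℝ) • (∑ i, e i) := by
    rw [hvdef, ← Finset.smul_sum]
  have hS0 : S = 0 := by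
    by_contra hS0
    have hSn : 0 < ‖S‖ := norm_pos_iff.mpr hS0
    have hrx : 0 < r - ‖xs - xbar‖ := by linarith [lt_of_le_of_lt hxsdist hsqγ]
    set t := min (min ((r - ‖xs - xbar‖) / (‖S‖ + 1)) (1/2)) (ν / (2 * s + 1)) with htdef
    have ht : 0 < t := lt_min (lt_min (by positivity) (by norm_num)) (by positivity)
    have ht2 : t ≤ 1/2 := le_trans (min_le_left _ _) (min_le_right _ _)
    have ht3 : t ≤ ν / (2 * s + 1) := min_le_right _ _
    have ht1 : t * ‖S‖ ≤ r - ‖xs - xbar‖ := by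
      have h : t ≤ (r - ‖xs - xbar‖) / (‖S‖ + 1) :=
        (min_le_left _ _).trans (min_le_left _ _)
      calc t * ‖S‖ ≤ ((r - ‖xs - xbar‖) / (‖S‖ + 1)) * ‖S‖ :=
            mul_le_mul_of_nonneg_right h (norm_nonneg S)
        _ ≤ r - ‖xs - xbar‖ := by
            rw [div_mul_eq_mul_div, div_le_iff₀ (by positivity)]
            nlinarith [norm_nonneg S]
    set x' := xs + t • (-S) with hx'def
    have hx'mem : x' ∈ Metric.closedBall xbar r := by
      rw [Metric.mem_closedBall, dist_eq_norm]
      have he : x' - xbar = (xs - xbar) + t • (-S) := by simp only [hx'def]; module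
      rw [he]
      calc ‖(xs - xbar) + t • (-S)‖ ≤ ‖xs - xbar‖ + ‖t • (-S)‖ := norm_add_le _ _
        _ = ‖xs - xbar‖ + t * ‖S‖ := by
            rw [norm_smul, norm_neg, Real.norm_eq_abs, abs_of_pos ht]
        _ ≤ r := by linarith
    have hmin' : φ xs ≤ φ x' := (isMinOn_iff.mp hxsmin) x' hx'mem
    set Q := ∑ i, ‖e i + t • (-S)‖ ^ 2 with hQdef
    have hQ0 : 0 ≤ Q := Finset.sum_nonneg fun i _ => sq_nonneg _
    have hφx' : φ x' ≤ Real.sqrt Q + ‖x' - xbar‖ ^ 2 := by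
      refine add_le_add ?_ le_rfl
      apply Real.sqrt_le_sqrt
      apply Finset.sum_le_sum
      intro i _
      have h1 : Metric.infDist (x' + a i) (C i) ≤ ‖e i + t • (-S)‖ := by
        have := Metric.infDist_le_dist_of_mem (x := x' + a i) (hwC i)
        rw [dist_eq_norm] at this
        have he : x' + a i - w i = e i + t • (-S) := by simp only [hx'def, hedef]; module
        rwa [he] at this
      have h2 : 0 ≤ Metric.infDist (x' + a i) (C i) := Metric.infDist_nonneg
      nlinarith [norm_nonneg (e i + t • (-S))]
    have hQexp : Q = D + 2 * t * ⟪∑ i, e i, -S⟫ + (s : ℝ) * (t ^ 2 * ‖S‖ ^ 2) := by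
      have h1 : ∀ i : Fin s, ‖e i + t • (-S)‖ ^ 2
          = ‖e i‖ ^ 2 + (2 * t) * ⟪e i, -S⟫ + t ^ 2 * ‖S‖ ^ 2 := by
        intro i
        rw [norm_add_sq_real, real_inner_smul_right, norm_smul, norm_neg,
          Real.norm_eq_abs, mul_pow, sq_abs]
        ring
      rw [hQdef, Finset.sum_congr rfl fun i _ => h1 i]
      rw [Finset.sum_add_distrib, Finset.sum_add_distrib, ← Finset.mul_sum, ← sum_inner,
        Finset.sum_const, Finset.card_univ, Fintype.card_fin, nsmul_eq_mul, hsumeD]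
    have hx'exp : ‖x' - xbar‖ ^ 2
        = ‖xs - xbar‖ ^ 2 + 2 * t * ⟪xs - xbar, -S⟫ + t ^ 2 * ‖S‖ ^ 2 := by
      have he : x' - xbar = (xs - xbar) + t • (-S) := by simp only [hx'def]; module
      rw [he, norm_add_sq_real, real_inner_smul_right, norm_smul, norm_neg,
        Real.norm_eq_abs, mul_pow, sq_abs]
      ring
    have hsqQ : 2 * ν * Real.sqrt Q ≤ ν ^ 2 + Q := by
      nlinarith [sq_nonneg (Real.sqrt Q - ν), Real.sq_sqrt hQ0]
    have hch : ν + ‖xs - xbar‖ ^ 2 ≤ Real.sqrt Q + ‖x' - xbar‖ ^ 2 := by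
      have := le_trans hmin' hφx'
      rw [hφxs_eq] at this
      exact this
    have hA : ν - (2 * t * ⟪xs - xbar, -S⟫ + t ^ 2 * ‖S‖ ^ 2) ≤ Real.sqrt Q := by
      rw [hx'exp] at hch; linarith
    have hkey : 2 * ν * (ν - (2 * t * ⟪xs - xbar, -S⟫ + t ^ 2 * ‖S‖ ^ 2)) ≤ ν ^ 2 + Q := by
      calc 2 * ν * (ν - (2 * t * ⟪xs - xbar, -S⟫ + t ^ 2 * ‖S‖ ^ 2))
          ≤ 2 * ν * Real.sqrt Q := by nlinarith [hA, hνpos]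
        _ ≤ ν ^ 2 + Q := hsqQ
    have hiE : ⟪∑ i, e i, -S⟫ = ν * ⟪∑ i, v i, -S⟫ := by
      rw [hSE, real_inner_smul_left, mul_inv_cancel_left₀ hνpos.ne']
    have hiS : ⟪∑ i, v i, -S⟫ + 2 * ⟪xs - xbar, -S⟫ = -‖S‖ ^ 2 := by
      have h1 : ⟪S, -S⟫ = -‖S‖ ^ 2 := by
        rw [inner_neg_right, real_inner_self_eq_norm_sq]
      have h2 : ⟪S, -S⟫ = ⟪∑ i, v i, -S⟫ + 2 * ⟪xs - xbar, -S⟫ := by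
        rw [hSdef, inner_add_left, real_inner_smul_left]
      linarith
    -- derive 0 ≤ -2νt‖S‖² + 2νt²‖S‖² + st²‖S‖²
    clear_value D ν e v S t x' Q
    rw [hQexp, hiE, ← hDν] at hkey
    have hstep : 0 ≤ -(2 * ν * t * ‖S‖ ^ 2) + 2 * ν * t ^ 2 * ‖S‖ ^ 2
        + (s : ℝ) * t ^ 2 * ‖S‖ ^ 2 := by
      nlinarith [hkey, hiS, mul_pos hνpos ht]
    -- final contradiction
    have hβpos : (0:ℝ) < ‖S‖ ^ 2 := by positivity
    have h3 : (0:ℝ) ≤ -(2 * ν) + 2 * ν * t + (s : ℝ) * t := by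
      have hc : (0:ℝ) < t * ‖S‖ ^ 2 := mul_pos ht hβpos
      have hre : -(2 * ν * t * ‖S‖ ^ 2) + 2 * ν * t ^ 2 * ‖S‖ ^ 2
          + (s : ℝ) * t ^ 2 * ‖S‖ ^ 2
          = (t * ‖S‖ ^ 2) * (-(2 * ν) + 2 * ν * t + (s : ℝ) * t) := by ring
      rw [hre] at hstep
      exact le_of_mul_le_mul_left (by linarith) hc
    have h4 : ν ≤ (s : ℝ) * t := by
      have hνt : 0 ≤ ν * (1 - 2 * t) := mul_nonneg hν0 (by linarith)
      linarith [h3, hνt]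
    have h5 : (s : ℝ) * t ≤ (s : ℝ) * (ν / (2 * s + 1)) :=
      mul_le_mul_of_nonneg_left ht3 (Nat.cast_nonneg s)
    have h6 : ν ≤ (s : ℝ) * ν / (2 * s + 1) := by
      rw [mul_div_assoc]
      exact le_trans h4 h5
    rw [le_div_iff₀ (by positivity)] at h6
    have h7 : (0:ℝ) ≤ (s : ℝ) * ν := mul_nonneg (Nat.cast_nonneg s) hν0
    linarith [h6, h7, hνpos]
  refine ⟨w, v, hwC, hvpre, hsumv2, ?_, hwbound⟩
  have hsum : ∑ i, v i = (-2 : ℝ) • (xs - xbar) := by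
    have := hS0
    rw [hSdef] at this
    have h2 : (∑ i, v i) = -((2:ℝ) • (xs - xbar)) := by
      rw [← sub_eq_zero]; rw [sub_neg_eq_add]; exact this
    rw [h2, ← neg_smul]
  rw [hsum]
  rw [norm_smul, Real.norm_eq_abs]
  have : |(-2 : ℝ)| = 2 := by norm_num
  rw [this]
  linarith [hxsdist]

set_option maxHeartbeats 1000000 in
/-- Extremal principle: if `x̄` is a locally extremal point of the system
`{Ω₁,…,Ωₛ}` (s ≥ 2) of nonempty subsets of ℝⁿ, each locally closed around the common
point `x̄`, then there are `vᵢ ∈ N(x̄;Ωᵢ)`, not all zero, with `v₁ + … + vₛ = 0`. -/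
theorem extremal_principle {n s : ℕ} (hs : 2 ≤ s)
    (Ω : Fin s → Set (EuclideanSpace ℝ (Fin n))) (xbar : EuclideanSpace ℝ (Fin n))
    (hne : ∀ i, (Ω i).Nonempty) (hx : ∀ i, xbar ∈ Ω i)
    (hcl : ∀ i, LocallyClosedAt (Ω i) xbar)
    (hext : LocallyExtremalAt Ω xbar) :
    ∃ v : Fin s → EuclideanSpace ℝ (Fin n),
      (∀ i, v i ∈ limNC (Ω i) xbar) ∧ (∃ i, v i ≠ 0) ∧ ∑ i, v i = 0 := by
  classical
  obtain ⟨U, hU, a, ha0, haE⟩ := hext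
  choose V hV hVc using hcl
  have hUV : U ∩ ⋂ i, V i ∈ 𝓝 xbar := Filter.inter_mem hU (Filter.iInter_mem.mpr hV)
  obtain ⟨ρ, hρpos, hball⟩ := Metric.nhds_basis_closedBall.mem_iff.mp hUV
  set r := ρ / 3 with hrdef
  have hr : 0 < r := by positivity
  set C : Fin s → Set (EuclideanSpace ℝ (Fin n)) :=
    fun i => Ω i ∩ Metric.closedBall xbar ρ with hCdef
  have hCcl : ∀ i, IsClosed (C i) := by
    intro i
    have hEq : C i = (Ω i ∩ V i) ∩ Metric.closedBall xbar ρ := by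
      ext z
      simp only [hCdef, Set.mem_inter_iff]
      constructor
      · rintro ⟨h1, h2⟩
        exact ⟨⟨h1, Set.mem_iInter.mp (hball h2).2 i⟩, h2⟩
      · rintro ⟨⟨h1, _⟩, h2⟩
        exact ⟨h1, h2⟩
    rw [hEq]
    exact (hVc i).inter Metric.isClosed_closedBall
  have hCx : ∀ i, xbar ∈ C i := fun i => ⟨hx i, Metric.mem_closedBall_self hρpos.le⟩
  have hCsub : ∀ i, C i ⊆ Ω i := fun i => Set.inter_subset_left
  -- the vanishing radii
  set η : ℕ → ℝ := fun m => min (min (r / 4) (r ^ 2 / (Real.sqrt s + 1))) (1 / (m + 1)) with hηdef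
  have hηpos : ∀ m, 0 < η m := fun m =>
    lt_min (lt_min (by positivity) (by positivity)) (by positivity)
  have hηr4 : ∀ m, η m ≤ r / 4 := fun m => le_trans (min_le_left _ _) (min_le_left _ _)
  have hηγ : ∀ m, Real.sqrt s * η m < r ^ 2 := by
    intro m
    have h1 : η m ≤ r ^ 2 / (Real.sqrt s + 1) := le_trans (min_le_left _ _) (min_le_right _ _)
    have h2 : 0 ≤ Real.sqrt s := Real.sqrt_nonneg _
    calc Real.sqrt s * η m ≤ Real.sqrt s * (r ^ 2 / (Real.sqrt s + 1)) :=
          mul_le_mul_of_nonneg_left h1 h2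
      _ < r ^ 2 := by
          rw [mul_div_assoc', div_lt_iff₀ (by positivity)]
          nlinarith [hr, sq_nonneg r]
  have hηm : ∀ m : ℕ, η m ≤ 1 / (m + 1) := fun m => min_le_right _ _
  -- per-m construction
  have hmain : ∀ m : ℕ, ∃ w v : Fin s → EuclideanSpace ℝ (Fin n),
      (∀ i, w i ∈ C i) ∧ (∀ i, v i ∈ preNC (C i) (w i)) ∧
      (∑ i, ‖v i‖ ^ 2 = 1) ∧
      ‖∑ i, v i‖ ≤ 2 * Real.sqrt (Real.sqrt s * η m) ∧
      (∀ i, ‖w i - xbar‖ ≤ 2 * (Real.sqrt (Real.sqrt s * η m) + η m)) := by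
    intro m
    have hk : ∃ k, ∀ i, ‖a i k‖ ≤ η m := by
      have h1 : ∀ i, ∀ᶠ k in atTop, ‖a i k‖ ≤ η m := by
        intro i
        have h2 := Metric.tendsto_nhds.mp (ha0 i) (η m) (hηpos m)
        filter_upwards [h2] with k hk
        rw [dist_zero_right] at hk
        exact hk.le
      exact (Filter.eventually_all.mpr h1).exists
    obtain ⟨k, hak⟩ := hk
    apply core_lemma C xbar hr (hηpos m) hCcl hCx (fun i => a i k) hak (hηγ m)
    intro x hxmem
    by_contra hc
    push_neg at hc
    have hxU : x ∈ (⋂ i, (fun z => z + a i k) ⁻¹' Ω i) ∩ U := by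
      constructor
      · exact Set.mem_iInter.mpr fun i => hCsub i (hc i)
      · have hx2 : x ∈ Metric.closedBall xbar ρ :=
          Metric.closedBall_subset_closedBall (by rw [hrdef]; linarith) hxmem
        exact (hball hx2).1
    rw [haE k] at hxU
    exact Set.notMem_empty x hxU
  choose w v hwC hvpre hnorm1 hsumb hwb using hmain
  -- compactness of the unit ball in the product
  have hmemK : ∀ m, v m ∈ Set.pi Set.univ
      (fun _ : Fin s => Metric.closedBall (0 : EuclideanSpace ℝ (Fin n)) 1) := by
    intro m
    rw [Set.mem_univ_pi]
    intro i
    rw [Metric.mem_closedBall, dist_zero_right]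
    have h1 : ‖v m i‖ ^ 2 ≤ 1 := by
      rw [← hnorm1 m]
      exact Finset.single_le_sum (f := fun j => ‖v m j‖ ^ 2)
        (fun j _ => sq_nonneg _) (Finset.mem_univ i)
    nlinarith [norm_nonneg (v m i)]
  obtain ⟨L, _, σ, hσ, hconv⟩ :=
    (isCompact_univ_pi fun _ : Fin s =>
      isCompact_closedBall (0 : EuclideanSpace ℝ (Fin n)) 1).tendsto_subseq hmemK
  have hconvi : ∀ i, Tendsto (fun m => v (σ m) i) atTop (𝓝 (L i)) := by
    intro i
    exact ((continuous_apply i).tendsto L).comp hconv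
  -- η (σ m) → 0 and the sqrt bound → 0
  have hη0 : Tendsto (fun m => η (σ m)) atTop (𝓝 0) := by
    apply squeeze_zero (fun m => (hηpos _).le)
      (g := fun m : ℕ => 1 / (m + 1 : ℝ))
    · intro m
      calc η (σ m) ≤ 1 / (σ m + 1 : ℝ) := hηm (σ m)
        _ ≤ 1 / (m + 1 : ℝ) := by
            apply one_div_le_one_div_of_le (by positivity)
            have h4 : m ≤ σ m := hσ.le_apply
            have h5 : (m : ℝ) ≤ (σ m : ℝ) := Nat.cast_le.mpr h4
            linarith
    · exact tendsto_one_div_add_atTop_nhds_zero_nat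
  have hβ0 : Tendsto (fun m => Real.sqrt (Real.sqrt s * η (σ m))) atTop (𝓝 0) := by
    have h1 : Tendsto (fun m => Real.sqrt s * η (σ m)) atTop (𝓝 0) := by
      simpa using hη0.const_mul (Real.sqrt s)
    have h2 := (Real.continuous_sqrt.tendsto 0).comp h1
    simpa only [Function.comp_def, Real.sqrt_zero] using h2
  refine ⟨L, ?_, ?_, ?_⟩
  · -- each L i is a limiting normal
    intro i
    refine ⟨fun m => w (σ m) i, fun m => v (σ m) i,
      fun m => hCsub i (hwC (σ m) i), ?_, ?_, hconvi i⟩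
    · intro m
      have hwlt : ‖w (σ m) i - xbar‖ < ρ := by
        have h1 := hwb (σ m) i
        have h2 : Real.sqrt (Real.sqrt s * η (σ m)) < r :=
          (Real.sqrt_lt' hr).mpr (hηγ (σ m))
        have h3 := hηr4 (σ m)
        have hρr : ρ = 3 * r := by rw [hrdef]; ring
        linarith
      exact preNC_localize hwlt (hvpre (σ m) i)
    · -- w (σ m) i → xbar
      rw [← tendsto_sub_nhds_zero_iff]
      apply squeeze_zero_norm (fun m => hwb (σ m) i)
      have := (hβ0.add hη0).const_mul 2
      simpa using this
  · -- not all zero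
    by_contra hc
    push_neg at hc
    have h1 : Tendsto (fun m => ∑ i, ‖v (σ m) i‖ ^ 2) atTop (𝓝 (∑ i, ‖L i‖ ^ 2)) := by
      apply tendsto_finset_sum
      intro i _
      exact ((hconvi i).norm).pow 2
    have h2 : Tendsto (fun m => ∑ i, ‖v (σ m) i‖ ^ 2) atTop (𝓝 1) := by
      have hEq : (fun m => ∑ i, ‖v (σ m) i‖ ^ 2) = fun _ => (1 : ℝ) :=
        funext fun m => hnorm1 (σ m)
      rw [hEq]
      exact tendsto_const_nhds
    have h3 := tendsto_nhds_unique h1 h2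
    simp only [hc, norm_zero] at h3
    norm_num at h3
  · -- sum is zero
    have h1 : Tendsto (fun m => ∑ i, v (σ m) i) atTop (𝓝 (∑ i, L i)) :=
      tendsto_finset_sum _ fun i _ => hconvi i
    have h2 : Tendsto (fun m => ∑ i, v (σ m) i) atTop (𝓝 0) := by
      apply squeeze_zero_norm (fun m => hsumb (σ m))
      have := hβ0.const_mul 2
      simpa using this
    exact tendsto_nhds_unique h1 h2

end
end

section
/- Let φ₁ : ℝⁿ → ℝ∪{+∞} be lower semicontinuous around x̄ ∈ dom φ₁, and let φᵢ : ℝⁿ → ℝ for i = 2,…,s (s ≥ 2) be locally Lipschitzian around x̄. Then the singular subdifferential sum rule holds with equality: ∂^∞(φ₁ + … + φₛ)(x̄) = ∂^∞φ₁(x̄). -/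
open Filter Topology RealInnerProductSpace

noncomputable section

variable {E Y : Type*}

section Geo
variable {E : Type*} [NormedAddCommGroup E] [InnerProductSpace ℝ E]

/-- Quadratic form on the product. -/
def QP (p : E × ℝ) : ℝ := ‖p.1‖^2 + p.2^2

lemma innP (p q : E × ℝ) : ⟪p, q⟫ = ⟪p.1, q.1⟫ + p.2 * q.2 := by
  change ⟪p.1, q.1⟫ + ⟪p.2, q.2⟫ = _
  rw [RCLike.inner_apply', conj_trivial]

lemma QP_nonneg (p : E × ℝ) : 0 ≤ QP p := by
  have := sq_nonneg ‖p.1‖; have := sq_nonneg p.2; unfold QP; nlinarith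

lemma QP_sub (p q : E × ℝ) : QP (p - q) = QP p - 2*⟪p, q⟫ + QP q := by
  unfold QP
  rw [Prod.fst_sub, Prod.snd_sub, innP, norm_sub_sq_real]
  ring

lemma QP_add (p q : E × ℝ) : QP (p + q) = QP p + 2*⟪p, q⟫ + QP q := by
  unfold QP
  rw [Prod.fst_add, Prod.snd_add, innP, norm_add_sq_real]
  ring

lemma QP_smul (t : ℝ) (p : E × ℝ) : QP (t • p) = t^2 * QP p := by
  unfold QP
  rw [Prod.smul_fst, Prod.smul_snd, norm_smul, Real.norm_eq_abs, smul_eq_mul]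
  rw [mul_pow, mul_pow, sq_abs]
  ring

lemma innP_smul_left (t : ℝ) (p q : E × ℝ) : ⟪t • p, q⟫ = t * ⟪p, q⟫ := by
  rw [innP, innP, Prod.smul_fst, Prod.smul_snd, real_inner_smul_left, smul_eq_mul]
  ring

lemma innP_neg_right (p q : E × ℝ) : ⟪p, -q⟫ = -⟪p, q⟫ := by
  rw [innP, innP, Prod.fst_neg, Prod.snd_neg, inner_neg_right]
  ring

lemma norm_sq_le_QP (p : E × ℝ) : ‖p‖^2 ≤ QP p := by
  have h1 : (0:ℝ) ≤ ‖p.1‖ := norm_nonneg _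
  have h2 : |p.2| ^ 2 = p.2 ^ 2 := sq_abs _
  rw [Prod.norm_def, Real.norm_eq_abs]
  unfold QP
  rcases le_total ‖p.1‖ |p.2| with h | h
  · rw [max_eq_right h]; nlinarith [sq_nonneg ‖p.1‖]
  · rw [max_eq_left h]; nlinarith [sq_nonneg p.2, abs_nonneg p.2]

lemma QP_le (p : E × ℝ) : QP p ≤ 2*‖p‖^2 := by
  have h1 : ‖p.1‖ ≤ ‖p‖ := norm_fst_le p
  have h2 : |p.2| ≤ ‖p‖ := by rw [← Real.norm_eq_abs]; exact norm_snd_le p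
  have h3 : |p.2| ^ 2 = p.2 ^ 2 := sq_abs _
  unfold QP
  nlinarith [norm_nonneg p.1, abs_nonneg p.2]

lemma zero_mem_preNC (Ω : Set (E × ℝ)) (x : E × ℝ) : (0 : E × ℝ) ∈ preNC Ω x := by
  intro ε hε
  refine ⟨1, one_pos, fun u _ _ => ?_⟩
  have : ⟪(0 : E × ℝ), u - x⟫ = 0 := by
    rw [innP, Prod.fst_zero, Prod.snd_zero, inner_zero_left]; ring
  rw [this]
  positivity

end Geo

section Proj
variable {E : Type*} [NormedAddCommGroup E] [InnerProductSpace ℝ E] [FiniteDimensional ℝ E]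

set_option maxHeartbeats 1000000 in
lemma proj_step (Ω : Set (E × ℝ)) (zb : E × ℝ) (r : ℝ) (hr : 0 < r)
    (hcl : IsClosed (Ω ∩ Metric.closedBall zb r))
    (z₀ : E × ℝ) (hz₀ : z₀ ∈ Ω) (hnear : dist z₀ zb < r/2)
    (v₀ : E × ℝ) (Ek : ℝ) (hEk : 0 < Ek)
    (hev : ∃ δ, 0 < δ ∧ ∀ u ∈ Ω, ‖u - z₀‖ < δ → ⟪v₀, u - z₀⟫ ≤ Ek * ‖u - z₀‖)
    (η : ℝ) (hη : 0 < η) :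
    ∃ w u, w ∈ Ω ∧ u ∈ preNC Ω w ∧ ‖w - z₀‖ ≤ η ∧ ‖u - v₀‖ ≤ 2 * Ek := by
  obtain ⟨δ, hδ, hN⟩ := hev
  obtain ⟨t, ht, c1, c2, c3⟩ :
      ∃ t : ℝ, 0 < t ∧ t*(3*‖v₀‖+3) < δ ∧ 2*t*Ek ≤ r/4 ∧ 2*t*Ek ≤ η := by
    refine ⟨min (δ / (3*‖v₀‖+4)) (min (r/(8*Ek+8)) (η/(2*Ek))), ?_, ?_, ?_, ?_⟩
    · exact lt_min (by positivity) (lt_min (by positivity) (by positivity))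
    · have h1 : min (δ / (3*‖v₀‖+4)) (min (r/(8*Ek+8)) (η/(2*Ek))) ≤ δ / (3*‖v₀‖+4) :=
        min_le_left _ _
      have h4 : (0:ℝ) < 3*‖v₀‖+4 := by positivity
      have h0 : (0:ℝ) < min (δ / (3*‖v₀‖+4)) (min (r/(8*Ek+8)) (η/(2*Ek))) :=
        lt_min (by positivity) (lt_min (by positivity) (by positivity))
      nlinarith [(le_div_iff₀ h4).mp h1]
    · have h1 : min (δ / (3*‖v₀‖+4)) (min (r/(8*Ek+8)) (η/(2*Ek))) ≤ r/(8*Ek+8) :=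
        le_trans (min_le_right _ _) (min_le_left _ _)
      have h4 : (0:ℝ) < 8*Ek+8 := by positivity
      nlinarith [(le_div_iff₀ h4).mp h1, hr.le]
    · have h1 : min (δ / (3*‖v₀‖+4)) (min (r/(8*Ek+8)) (η/(2*Ek))) ≤ η/(2*Ek) :=
        le_trans (min_le_right _ _) (min_le_right _ _)
      have h4 : (0:ℝ) < 2*Ek := by positivity
      nlinarith [(le_div_iff₀ h4).mp h1]
  set z : E × ℝ := z₀ + t • v₀ with hz_def
  set C : Set (E × ℝ) := Ω ∩ Metric.closedBall zb r with hC_def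
  have hz₀C : z₀ ∈ C := ⟨hz₀, by
    rw [Metric.mem_closedBall]; linarith⟩
  have hCb : Bornology.IsBounded C := Metric.isBounded_closedBall.subset Set.inter_subset_right
  have hCc : IsCompact C := Metric.isCompact_of_isClosed_isBounded hcl hCb
  have hcont : Continuous fun u : E × ℝ => QP (z - u) := by
    show Continuous fun u : E × ℝ => ‖(z - u).1‖^2 + (z - u).2^2
    simp only [Prod.fst_sub, Prod.snd_sub]
    fun_prop
  obtain ⟨w, hwC, hwmin⟩ := hCc.exists_isMinOn ⟨z₀, hz₀C⟩ hcont.continuousOn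
  have hmin : ∀ u ∈ C, QP (z - w) ≤ QP (z - u) := fun u hu => hwmin hu
  -- Step A : quadratic prenormal inequality
  have stepA : ∀ u ∈ C, ⟪z - w, u - w⟫ ≤ ‖u - w‖^2 := by
    intro u hu
    have h1 := hmin u hu
    have h2 : z - u = (z - w) - (u - w) := by abel
    have e := QP_sub (z - w) (u - w)
    rw [h2, e] at h1
    have h3 := norm_sq_le_QP (u - w)
    have h4 := QP_le (u - w)
    linarith
  -- Step B : crude bound on ‖w - z₀‖
  have hQzw : QP (z - w) ≤ t^2 * QP v₀ := by
    have h := hmin z₀ hz₀C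
    have h2 : z - z₀ = t • v₀ := by rw [hz_def]; abel
    rwa [h2, QP_smul] at h
  have hzw : ‖z - w‖ ≤ 2*t*‖v₀‖ + t := by
    have h1 := norm_sq_le_QP (z - w)
    have h2 := QP_le v₀
    have key : ‖z - w‖^2 ≤ (2*t*‖v₀‖ + t)^2 := by nlinarith [sq_nonneg t, ht.le, norm_nonneg v₀]
    have hb : (0:ℝ) ≤ 2*t*‖v₀‖ + t := by positivity
    nlinarith [norm_nonneg (z - w)]
  have hwz₀_crude : ‖w - z₀‖ < δ := by
    have h1 : ‖w - z₀‖ ≤ ‖w - z‖ + ‖z - z₀‖ := norm_sub_le_norm_sub_add_norm_sub w z z₀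
    have h2 : ‖z - z₀‖ = t * ‖v₀‖ := by
      have h : z - z₀ = t • v₀ := by rw [hz_def]; abel
      rw [h, norm_smul, Real.norm_eq_abs, abs_of_pos ht]
    have h3 : ‖w - z‖ = ‖z - w‖ := norm_sub_rev w z
    nlinarith [norm_nonneg v₀]
  -- Step C : refined bound via the ε-normal inequality
  have hvw : ⟪v₀, w - z₀⟫ ≤ Ek * ‖w - z₀‖ := hN w hwC.1 hwz₀_crude
  have hQz₀w : QP (z₀ - w) ≤ 2*t*(Ek * ‖w - z₀‖) := by
    have h2 : z - w = t • v₀ + (z₀ - w) := by rw [hz_def]; abel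
    have h3 := hQzw
    rw [h2, QP_add, QP_smul, innP_smul_left] at h3
    have h4 : ⟪v₀, z₀ - w⟫ = -⟪v₀, w - z₀⟫ := by
      rw [← innP_neg_right]; congr 1; abel
    rw [h4] at h3
    nlinarith
  have hwz₀ : ‖w - z₀‖ ≤ 2*t*Ek := by
    have h1 : ‖w - z₀‖^2 ≤ QP (z₀ - w) := by
      have h : ‖w - z₀‖ = ‖z₀ - w‖ := norm_sub_rev _ _
      rw [h]; exact norm_sq_le_QP _
    rcases eq_or_lt_of_le (norm_nonneg (w - z₀)) with h0 | h0
    · rw [← h0]; positivity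
    · nlinarith
  -- the normal vector
  refine ⟨w, t⁻¹ • (z - w), hwC.1, ?_, le_trans hwz₀ c3, ?_⟩
  · -- preNC membership
    intro ε hε
    have hwzb : dist w zb < r := by
      have h1 : dist w zb ≤ dist w z₀ + dist z₀ zb := dist_triangle w z₀ zb
      have h2 : dist w z₀ = ‖w - z₀‖ := dist_eq_norm _ _
      nlinarith
    refine ⟨min (t*ε) (r - dist w zb), lt_min (by positivity) (by linarith), fun u hu hun => ?_⟩
    have huC : u ∈ C := by
      refine ⟨hu, ?_⟩
      rw [Metric.mem_closedBall]
      have h1 : dist u zb ≤ dist u w + dist w zb := dist_triangle u w zb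
      have h2 : dist u w = ‖u - w‖ := dist_eq_norm _ _
      have h3 : ‖u - w‖ < r - dist w zb := lt_of_lt_of_le hun (min_le_right _ _)
      linarith
    have hA := stepA u huC
    rw [innP_smul_left]
    have h5 : ‖u - w‖ < t*ε := lt_of_lt_of_le hun (min_le_left _ _)
    have h6 : t⁻¹ * ⟪z - w, u - w⟫ ≤ t⁻¹ * ‖u - w‖^2 :=
      mul_le_mul_of_nonneg_left hA (by positivity)
    have h7 : t⁻¹ * ‖u - w‖^2 ≤ ε * ‖u - w‖ := by
      have h8 : ‖u - w‖^2 ≤ (t*ε) * ‖u - w‖ := by nlinarith [norm_nonneg (u - w)]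
      have h9 := mul_le_mul_of_nonneg_left h8 (le_of_lt (inv_pos.mpr ht))
      calc t⁻¹ * ‖u - w‖^2 ≤ t⁻¹ * ((t*ε) * ‖u - w‖) := h9
        _ = ε * ‖u - w‖ := by field_simp
    linarith
  · -- distance to v₀
    have h1 : t⁻¹ • (z - w) - v₀ = t⁻¹ • (z₀ - w) := by
      have h2 : v₀ = t⁻¹ • (t • v₀) := by rw [smul_smul, inv_mul_cancel₀ ht.ne', one_smul]
      nth_rewrite 1 [h2]
      rw [← smul_sub]
      congr 1
      rw [hz_def]; abel
    rw [h1, norm_smul, Real.norm_eq_abs, abs_of_pos (inv_pos.mpr ht)]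
    have h3 : ‖z₀ - w‖ = ‖w - z₀‖ := norm_sub_rev _ _
    rw [h3]
    have h4 := mul_le_mul_of_nonneg_left hwz₀ (le_of_lt (inv_pos.mpr ht))
    calc t⁻¹ * ‖w - z₀‖ ≤ t⁻¹ * (2*t*Ek) := h4
      _ = 2*Ek := by field_simp

end Proj

section LemA
variable {E : Type*} [NormedAddCommGroup E] [InnerProductSpace ℝ E] [FiniteDimensional ℝ E]

set_option maxHeartbeats 1000000 in
lemma lemA (Ω : Set (E × ℝ)) (zbar v : E × ℝ) (r : ℝ) (hr : 0 < r)
    (hcl : IsClosed (Ω ∩ Metric.closedBall zbar r))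
    (zs vs : ℕ → E × ℝ) (ε : ℕ → ℝ)
    (hzs : ∀ k, zs k ∈ Ω)
    (hev : ∀ k, ∀ e : ℝ, 0 < e → ∃ δ, 0 < δ ∧
        ∀ u ∈ Ω, ‖u - zs k‖ < δ → ⟪vs k, u - zs k⟫ ≤ (e + ε k) * ‖u - zs k‖)
    (hz : Tendsto zs atTop (𝓝 zbar)) (hv : Tendsto vs atTop (𝓝 v))
    (hε : Tendsto ε atTop (𝓝 0)) :
    v ∈ limNC Ω zbar := by
  have key : ∀ k : ℕ, ∃ w u, w ∈ Ω ∧ u ∈ preNC Ω w ∧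
      (dist (zs k) zbar < r/2 →
        ‖w - zs k‖ ≤ 1/(k+1) ∧ ‖u - vs k‖ ≤ 2 * (1/(k+1) + |ε k|)) := by
    intro k
    by_cases h : dist (zs k) zbar < r/2
    · have hEk : (0:ℝ) < 1/(k+1) + |ε k| := by positivity
      have hev' : ∃ δ, 0 < δ ∧ ∀ u ∈ Ω, ‖u - zs k‖ < δ →
          ⟪vs k, u - zs k⟫ ≤ (1/(k+1) + |ε k|) * ‖u - zs k‖ := by
        obtain ⟨δ, hδ, hN⟩ := hev k (1/(k+1)) (by positivity)
        refine ⟨δ, hδ, fun u hu hun => le_trans (hN u hu hun) ?_⟩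
        have h1 : (1/(k+1) + ε k : ℝ) ≤ 1/(k+1) + |ε k| := by
          have := le_abs_self (ε k); linarith
        exact mul_le_mul_of_nonneg_right h1 (norm_nonneg _)
      obtain ⟨w, u, hw, hu, hwz, huv⟩ :=
        proj_step Ω zbar r hr hcl (zs k) (hzs k) h (vs k) _ hEk hev' (1/(k+1)) (by positivity)
      exact ⟨w, u, hw, hu, fun _ => ⟨hwz, huv⟩⟩
    · exact ⟨zs k, 0, hzs k, zero_mem_preNC Ω (zs k), fun h' => absurd h' h⟩
  choose ws us hwΩ huN hbnd using key
  have hev_near : ∀ᶠ k in atTop, dist (zs k) zbar < r/2 := by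
    have := (tendsto_iff_dist_tendsto_zero.mp hz).eventually (eventually_lt_nhds (by linarith : (0:ℝ) < r/2))
    exact this
  have hdz : Tendsto (fun k => dist (zs k) zbar) atTop (𝓝 0) := tendsto_iff_dist_tendsto_zero.mp hz
  have hone : Tendsto (fun k : ℕ => (1:ℝ)/(k+1)) atTop (𝓝 0) := tendsto_one_div_add_atTop_nhds_zero_nat
  have habs : Tendsto (fun k => |ε k|) atTop (𝓝 0) := by
    have := hε.abs; simpa using this
  have hws : Tendsto ws atTop (𝓝 zbar) := by
    rw [tendsto_iff_dist_tendsto_zero]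
    have hg : Tendsto (fun k : ℕ => 1/(k+1) + dist (zs k) zbar) atTop (𝓝 0) := by
      have : Tendsto (fun k : ℕ => 1/(k+1) + dist (zs k) zbar) atTop (𝓝 (0 + 0)) := hone.add hdz
      simpa using this
    refine squeeze_zero' (Eventually.of_forall fun k => dist_nonneg)
      (hev_near.mono fun k hk => ?_) hg
    have h1 : dist (ws k) zbar ≤ dist (ws k) (zs k) + dist (zs k) zbar := dist_triangle _ _ _
    have h2 : dist (ws k) (zs k) = ‖ws k - zs k‖ := dist_eq_norm _ _
    have h3 := (hbnd k hk).1
    linarith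
  have hus : Tendsto us atTop (𝓝 v) := by
    rw [tendsto_iff_dist_tendsto_zero]
    have hg : Tendsto (fun k : ℕ => 2 * (1/(k+1) + |ε k|) + dist (vs k) v) atTop (𝓝 0) := by
      have h4 : Tendsto (fun k : ℕ => 2 * (1/(k+1) + |ε k|) + dist (vs k) v) atTop
          (𝓝 (2 * (0 + 0) + 0)) :=
        ((hone.add habs).const_mul 2).add (tendsto_iff_dist_tendsto_zero.mp hv)
      simpa using h4
    refine squeeze_zero' (Eventually.of_forall fun k => dist_nonneg)
      (hev_near.mono fun k hk => ?_) hg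
    have h1 : dist (us k) v ≤ dist (us k) (vs k) + dist (vs k) v := dist_triangle _ _ _
    have h2 : dist (us k) (vs k) = ‖us k - vs k‖ := dist_eq_norm _ _
    have h3 := (hbnd k hk).2
    linarith
  exact ⟨ws, us, hwΩ, huN, hws, hus⟩

end LemA

section ERealAux

lemma ereal_add_coe_le_coe_iff (e : EReal) (c r : ℝ) :
    e + (c : EReal) ≤ (r : EReal) ↔ e ≤ ((r - c : ℝ) : EReal) := by
  induction e using EReal.rec with
  | bot => simp
  | coe a => norm_cast; constructor <;> intro <;> linarith
  | top => simpa [EReal.top_add_coe] using (EReal.coe_ne_top (r - c))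

lemma ereal_add_coe_add_neg (e : EReal) (c : ℝ) : (e + (c : EReal)) + ((-c : ℝ) : EReal) = e := by
  induction e using EReal.rec with
  | bot => simp
  | coe a => norm_cast; ring
  | top => simp [EReal.top_add_coe]

lemma ereal_add_coe_ne_top (e : EReal) (c : ℝ) (h : e ≠ ⊤) : e + (c : EReal) ≠ ⊤ := by
  induction e using EReal.rec with
  | bot => simp
  | coe a => norm_cast; exact EReal.coe_ne_top _
  | top => simp at h

lemma ereal_add_coe_ne_bot (e : EReal) (c : ℝ) (h : e ≠ ⊥) : e + (c : EReal) ≠ ⊥ := by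
  induction e using EReal.rec with
  | bot => simp at h
  | coe a => norm_cast; exact EReal.coe_ne_bot _
  | top => simp [EReal.top_add_coe]

lemma mem_epi_add_iff {E : Type*} (φA : E → EReal) (ψ : E → ℝ) (u : E) (β : ℝ) :
    ((u, β) : E × ℝ) ∈ epiF (fun z => φA z + ((ψ z : ℝ) : EReal)) ↔
      ((u, β - ψ u) : E × ℝ) ∈ epiF φA := by
  show φA u + (ψ u : EReal) ≤ (β : EReal) ↔ φA u ≤ ((β - ψ u : ℝ) : EReal)
  exact ereal_add_coe_le_coe_iff (φA u) (ψ u) β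

end ERealAux

section Transfer
variable {E : Type*} [NormedAddCommGroup E] [InnerProductSpace ℝ E]

set_option maxHeartbeats 1000000 in
lemma transfer (φA : E → EReal) (ψ : E → ℝ) (L r₀ : ℝ) (hL : 0 ≤ L) (xb : E) (hr₀ : 0 < r₀)
    (hlip : ∀ u ∈ Metric.ball xb r₀, ∀ w ∈ Metric.ball xb r₀, |ψ u - ψ w| ≤ L * ‖u - w‖)
    (x : E) (α : ℝ) (hx : x ∈ Metric.ball xb r₀) (wt : E × ℝ)
    (hN : wt ∈ preNC (epiF (fun z => φA z + ((ψ z : ℝ) : EReal))) ((x, α) : E × ℝ)) :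
    ∀ e : ℝ, 0 < e → ∃ δ, 0 < δ ∧ ∀ p ∈ epiF φA, ‖p - ((x, α - ψ x) : E × ℝ)‖ < δ →
      ⟪wt, p - ((x, α - ψ x) : E × ℝ)⟫ ≤ (e + |wt.2| * L) * ‖p - ((x, α - ψ x) : E × ℝ)‖ := by
  intro e he
  have hL1 : (0:ℝ) < 1 + L := by linarith
  obtain ⟨δ', hδ', hN'⟩ := hN (e/(1+L)) (by positivity)
  have hxb : dist x xb < r₀ := Metric.mem_ball.mp hx
  refine ⟨min (δ'/(1+L)) (r₀ - dist x xb), lt_min (by positivity) (by linarith), ?_⟩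
  rintro ⟨u, γ⟩ hp hpn
  set N : ℝ := ‖((u, γ) : E × ℝ) - ((x, α - ψ x) : E × ℝ)‖ with hN_def
  have hcomp : ((u, γ) : E × ℝ) - ((x, α - ψ x) : E × ℝ) = ((u - x, γ - (α - ψ x)) : E × ℝ) := rfl
  have hNmax : N = max ‖u - x‖ |γ - (α - ψ x)| := by
    rw [hN_def, hcomp, Prod.norm_def, Real.norm_eq_abs]
  have hNnn : 0 ≤ N := norm_nonneg _
  have hux : ‖u - x‖ ≤ N := by rw [hNmax]; exact le_max_left _ _
  have hγ : |γ - (α - ψ x)| ≤ N := by rw [hNmax]; exact le_max_right _ _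
  have hNlt1 : N < δ'/(1+L) := lt_of_lt_of_le hpn (min_le_left _ _)
  have hNlt2 : N < r₀ - dist x xb := lt_of_lt_of_le hpn (min_le_right _ _)
  have hub : u ∈ Metric.ball xb r₀ := by
    rw [Metric.mem_ball]
    have h1 : dist u xb ≤ dist u x + dist x xb := dist_triangle _ _ _
    have h2 : dist u x = ‖u - x‖ := dist_eq_norm _ _
    linarith
  have hψ : |ψ u - ψ x| ≤ L * ‖u - x‖ := hlip u hub x hx
  set β : ℝ := γ + ψ u with hβ_def
  have hepiB : ((u, β) : E × ℝ) ∈ epiF (fun z => φA z + ((ψ z : ℝ) : EReal)) := by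
    rw [mem_epi_add_iff]
    have : (β - ψ u : ℝ) = γ := by rw [hβ_def]; ring
    rw [this]
    exact hp
  have hβα : |β - α| ≤ (1 + L) * N := by
    have h1 : β - α = (γ - (α - ψ x)) + (ψ u - ψ x) := by rw [hβ_def]; ring
    have h2 : |β - α| ≤ |γ - (α - ψ x)| + |ψ u - ψ x| := by rw [h1]; exact abs_add_le _ _
    have h3 : L * ‖u - x‖ ≤ L * N := mul_le_mul_of_nonneg_left hux hL
    nlinarith
  have hcomp2 : ((u, β) : E × ℝ) - ((x, α) : E × ℝ) = ((u - x, β - α) : E × ℝ) := rfl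
  have hnorm2 : ‖((u, β) : E × ℝ) - ((x, α) : E × ℝ)‖ ≤ (1 + L) * N := by
    rw [hcomp2, Prod.norm_def, Real.norm_eq_abs]
    refine max_le ?_ hβα
    nlinarith
  have hnlt : ‖((u, β) : E × ℝ) - ((x, α) : E × ℝ)‖ < δ' := by
    have : (1 + L) * N < (1 + L) * (δ'/(1+L)) := by
      exact mul_lt_mul_of_pos_left hNlt1 hL1
    have h2 : (1 + L) * (δ'/(1+L)) = δ' := by field_simp
    linarith
  have happ := hN' ((u, β) : E × ℝ) hepiB hnlt
  have happ2 : ⟪wt, ((u, β) : E × ℝ) - ((x, α) : E × ℝ)⟫ ≤ e * N := by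
    have h1 : (e/(1+L)) * ‖((u, β) : E × ℝ) - ((x, α) : E × ℝ)‖ ≤ (e/(1+L)) * ((1+L)*N) :=
      mul_le_mul_of_nonneg_left hnorm2 (by positivity)
    have h2 : (e/(1+L)) * ((1+L)*N) = e * N := by field_simp
    linarith
  have hpair1 : ⟪wt, ((u, β) : E × ℝ) - ((x, α) : E × ℝ)⟫ = ⟪wt.1, u - x⟫ + wt.2 * (β - α) := by
    rw [hcomp2, innP]
  have hpair2 : ⟪wt, ((u, γ) : E × ℝ) - ((x, α - ψ x) : E × ℝ)⟫
      = ⟪wt.1, u - x⟫ + wt.2 * (γ - (α - ψ x)) := by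
    rw [hcomp, innP]
  have hdiff : wt.2 * (γ - (α - ψ x)) - wt.2 * (β - α) ≤ |wt.2| * L * N := by
    have h1 : wt.2 * (γ - (α - ψ x)) - wt.2 * (β - α) = wt.2 * (ψ x - ψ u) := by
      rw [hβ_def]; ring
    have h2 : wt.2 * (ψ x - ψ u) ≤ |wt.2 * (ψ x - ψ u)| := le_abs_self _
    have h3 : |wt.2 * (ψ x - ψ u)| = |wt.2| * |ψ x - ψ u| := abs_mul _ _
    have h4 : |ψ x - ψ u| = |ψ u - ψ x| := abs_sub_comm _ _
    have h5 : |wt.2| * |ψ u - ψ x| ≤ |wt.2| * (L * ‖u - x‖) :=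
      mul_le_mul_of_nonneg_left hψ (abs_nonneg _)
    have h6 : |wt.2| * (L * ‖u - x‖) ≤ |wt.2| * (L * N) :=
      mul_le_mul_of_nonneg_left (mul_le_mul_of_nonneg_left hux hL) (abs_nonneg _)
    rw [h1]
    calc wt.2 * (ψ x - ψ u) ≤ |wt.2 * (ψ x - ψ u)| := h2
      _ = |wt.2| * |ψ u - ψ x| := by rw [h3, h4]
      _ ≤ |wt.2| * (L * N) := le_trans h5 h6
      _ = |wt.2| * L * N := by ring
  rw [hpair2]
  rw [hpair1] at happ2
  nlinarith

end Transfer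

section Closedness
variable {E : Type*} [NormedAddCommGroup E]

set_option maxHeartbeats 1000000 in
lemma epi_locally_closed (φ : E → EReal) (xb : E) (h : LscAround φ xb) :
    ∃ rc : ℝ, 0 < rc ∧ IsClosed (epiF φ ∩ (Metric.closedBall xb rc ×ˢ (Set.univ : Set ℝ))) := by
  obtain ⟨U, hU, hsc⟩ := h
  have hsc' : LowerSemicontinuousOn φ (interior U) := hsc.mono interior_subset
  have hx : xb ∈ interior U := mem_interior_iff_mem_nhds.mpr hU
  obtain ⟨ρ, hρ, hb⟩ := Metric.isOpen_iff.mp isOpen_interior xb hx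
  refine ⟨ρ/2, by linarith, ?_⟩
  have hball : Metric.closedBall xb (ρ/2) ⊆ interior U :=
    (Metric.closedBall_subset_ball (by linarith)).trans hb
  apply IsSeqClosed.isClosed
  intro ps p hps hp
  have hp1 : Tendsto (fun k => (ps k).1) atTop (𝓝 p.1) := (continuous_fst.tendsto p).comp hp
  have hp2 : Tendsto (fun k => (ps k).2) atTop (𝓝 p.2) := (continuous_snd.tendsto p).comp hp
  have hmem1 : ∀ k, (ps k).1 ∈ Metric.closedBall xb (ρ/2) := fun k => (hps k).2.1
  have p1mem : p.1 ∈ Metric.closedBall xb (ρ/2) :=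
    Metric.isClosed_closedBall.mem_of_tendsto hp1 (Eventually.of_forall hmem1)
  refine ⟨?_, p1mem, Set.mem_univ _⟩
  show φ p.1 ≤ (p.2 : EReal)
  by_contra hcon
  push_neg at hcon
  obtain ⟨y, hy1, hy2⟩ := exists_between hcon
  have hytop : y ≠ ⊤ := (lt_of_lt_of_le hy2 le_top).ne
  have hybot : y ≠ ⊥ := ne_bot_of_gt hy1
  lift y to ℝ using ⟨hytop, hybot⟩ with yr
  have hev2 : ∀ᶠ z in 𝓝[interior U] p.1, (yr : EReal) < φ z := hsc' p.1 (hball p1mem) _ hy2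
  rw [isOpen_interior.nhdsWithin_eq (hball p1mem)] at hev2
  have hev3 : ∀ᶠ k in atTop, (yr : EReal) < φ ((ps k).1) := hp1.eventually hev2
  have hev4 : ∀ᶠ k in atTop, yr ≤ (ps k).2 := by
    refine hev3.mono fun k hk => ?_
    have := lt_of_lt_of_le hk (hps k).1
    exact_mod_cast this.le
  have : yr ≤ p.2 := ge_of_tendsto hp2 hev4
  have : (yr : EReal) ≤ (p.2 : EReal) := by exact_mod_cast this
  exact absurd (lt_of_lt_of_le hy1 this) (lt_irrefl _)

set_option maxHeartbeats 1000000 in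
lemma epi_add_locally_closed (φA : E → EReal) (ψ : E → ℝ) (xb : E) (L r₀ rc : ℝ)
    (hr₀ : 0 < r₀) (hrc : 0 < rc)
    (hlip : ∀ u ∈ Metric.ball xb r₀, ∀ w ∈ Metric.ball xb r₀, |ψ u - ψ w| ≤ L * ‖u - w‖)
    (hcl : IsClosed (epiF φA ∩ (Metric.closedBall xb rc ×ˢ (Set.univ : Set ℝ)))) :
    ∃ rc' : ℝ, 0 < rc' ∧
      IsClosed (epiF (fun z => φA z + ((ψ z : ℝ) : EReal)) ∩
        (Metric.closedBall xb rc' ×ˢ (Set.univ : Set ℝ))) := by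
  refine ⟨min rc (r₀/2), lt_min hrc (by linarith), ?_⟩
  have hsub1 : Metric.closedBall xb (min rc (r₀/2)) ⊆ Metric.closedBall xb rc :=
    Metric.closedBall_subset_closedBall (min_le_left _ _)
  have hsub2 : Metric.closedBall xb (min rc (r₀/2)) ⊆ Metric.ball xb r₀ := by
    refine (Metric.closedBall_subset_closedBall (min_le_right _ _)).trans ?_
    exact Metric.closedBall_subset_ball (by linarith)
  apply IsSeqClosed.isClosed
  intro ps p hps hp
  have hp1 : Tendsto (fun k => (ps k).1) atTop (𝓝 p.1) := (continuous_fst.tendsto p).comp hp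
  have hp2 : Tendsto (fun k => (ps k).2) atTop (𝓝 p.2) := (continuous_snd.tendsto p).comp hp
  have hmem1 : ∀ k, (ps k).1 ∈ Metric.closedBall xb (min rc (r₀/2)) := fun k => (hps k).2.1
  have p1mem : p.1 ∈ Metric.closedBall xb (min rc (r₀/2)) :=
    Metric.isClosed_closedBall.mem_of_tendsto hp1 (Eventually.of_forall hmem1)
  refine ⟨?_, p1mem, Set.mem_univ _⟩
  -- continuity of ψ along the sequence
  have hnorm0 : Tendsto (fun k => ‖(ps k).1 - p.1‖) atTop (𝓝 0) := by
    rw [← tendsto_iff_norm_sub_tendsto_zero]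
    exact hp1
  have hψt : Tendsto (fun k => ψ ((ps k).1)) atTop (𝓝 (ψ p.1)) := by
    have hbd : ∀ k, ‖ψ ((ps k).1) - ψ p.1‖ ≤ L * ‖(ps k).1 - p.1‖ := by
      intro k
      rw [Real.norm_eq_abs]
      exact hlip _ (hsub2 (hmem1 k)) _ (hsub2 p1mem)
    have h0 : Tendsto (fun k => ψ ((ps k).1) - ψ p.1) atTop (𝓝 0) := by
      refine squeeze_zero_norm hbd ?_
      have := hnorm0.const_mul L
      simpa using this
    have := h0.add_const (ψ p.1)
    simpa using this
  -- transformed sequence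
  have hqmem : ∀ k, (((ps k).1, (ps k).2 - ψ ((ps k).1)) : E × ℝ) ∈
      epiF φA ∩ (Metric.closedBall xb rc ×ˢ (Set.univ : Set ℝ)) := by
    intro k
    refine ⟨?_, hsub1 (hmem1 k), Set.mem_univ _⟩
    have h1 := (hps k).1
    have h2 : (((ps k).1, (ps k).2) : E × ℝ) ∈ epiF (fun z => φA z + ((ψ z : ℝ) : EReal)) := h1
    exact (mem_epi_add_iff φA ψ _ _).mp h2
  have hqt : Tendsto (fun k => (((ps k).1, (ps k).2 - ψ ((ps k).1)) : E × ℝ)) atTop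
      (𝓝 ((p.1, p.2 - ψ p.1) : E × ℝ)) :=
    hp1.prodMk_nhds (hp2.sub hψt)
  have hlim := hcl.mem_of_tendsto hqt (Eventually.of_forall hqmem)
  have h3 : ((p.1, p.2 - ψ p.1) : E × ℝ) ∈ epiF φA := hlim.1
  exact (mem_epi_add_iff φA ψ p.1 p.2).mpr h3

end Closedness

section MainIncl
variable {E : Type*} [NormedAddCommGroup E] [InnerProductSpace ℝ E] [FiniteDimensional ℝ E]

set_option maxHeartbeats 2000000 in
lemma sing_incl (φA : E → EReal) (ψ : E → ℝ) (xb : E) (L r₀ : ℝ) (hL : 0 ≤ L) (hr₀ : 0 < r₀)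
    (hlip : ∀ u ∈ Metric.ball xb r₀, ∀ w ∈ Metric.ball xb r₀, |ψ u - ψ w| ≤ L * ‖u - w‖)
    (hfin : φA xb ≠ ⊤) (hbotA : φA xb ≠ ⊥)
    (rc : ℝ) (hrc : 0 < rc)
    (hcl : IsClosed (epiF φA ∩ (Metric.closedBall xb rc ×ˢ (Set.univ : Set ℝ)))) :
    singSubdiff (fun z => φA z + ((ψ z : ℝ) : EReal)) xb ⊆ singSubdiff φA xb := by
  intro v hv
  obtain ⟨xs, vs, hmem, hpre, hxs, hvs⟩ := hv
  set cA : ℝ := (φA xb).toReal with hcA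
  have hφAxb : φA xb = (cA : EReal) := (EReal.coe_toReal hfin hbotA).symm
  have hcB : ((fun z => φA z + ((ψ z : ℝ) : EReal)) xb).toReal = cA + ψ xb := by
    show (φA xb + ((ψ xb : ℝ) : EReal)).toReal = cA + ψ xb
    rw [hφAxb, ← EReal.coe_add, EReal.toReal_coe]
  rw [hcB] at hxs
  -- componentwise convergence
  have hx1 : Tendsto (fun k => (xs k).1) atTop (𝓝 xb) := (continuous_fst.tendsto _).comp hxs
  have hx2 : Tendsto (fun k => (xs k).2) atTop (𝓝 (cA + ψ xb)) := (continuous_snd.tendsto _).comp hxs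
  have hv2 : Tendsto (fun k => (vs k).2) atTop (𝓝 0) := (continuous_snd.tendsto _).comp hvs
  -- eventually inside the Lipschitz ball
  have hballev : ∀ᶠ k in atTop, (xs k).1 ∈ Metric.ball xb r₀ :=
    hx1 (Metric.ball_mem_nhds xb hr₀)
  obtain ⟨K, hK⟩ := eventually_atTop.mp hballev
  have hshift : Tendsto (fun k : ℕ => k + K) atTop atTop := tendsto_add_atTop_nat K
  -- shifted sequences
  set xs' : ℕ → E × ℝ := fun k => xs (k + K) with hxs'_def
  set vs' : ℕ → E × ℝ := fun k => vs (k + K) with hvs'_def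
  have hball' : ∀ k, (xs' k).1 ∈ Metric.ball xb r₀ := fun k => hK (k + K) (Nat.le_add_left _ _)
  have hx1' : Tendsto (fun k => (xs' k).1) atTop (𝓝 xb) := hx1.comp hshift
  have hx2' : Tendsto (fun k => (xs' k).2) atTop (𝓝 (cA + ψ xb)) := hx2.comp hshift
  have hxs'' : Tendsto xs' atTop (𝓝 ((xb, cA + ψ xb) : E × ℝ)) := hxs.comp hshift
  have hvs' : Tendsto vs' atTop (𝓝 ((v, (0:ℝ)) : E × ℝ)) := hvs.comp hshift
  have hv2' : Tendsto (fun k => (vs' k).2) atTop (𝓝 0) := hv2.comp hshift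
  -- continuity of ψ along the sequence
  have hnorm0 : Tendsto (fun k => ‖(xs' k).1 - xb‖) atTop (𝓝 0) := by
    rw [← tendsto_iff_norm_sub_tendsto_zero]; exact hx1'
  have hψt : Tendsto (fun k => ψ ((xs' k).1)) atTop (𝓝 (ψ xb)) := by
    have hbd : ∀ k, ‖ψ ((xs' k).1) - ψ xb‖ ≤ L * ‖(xs' k).1 - xb‖ := by
      intro k
      rw [Real.norm_eq_abs]
      exact hlip _ (hball' k) _ (Metric.mem_ball_self hr₀)
    have h0 : Tendsto (fun k => ψ ((xs' k).1) - ψ xb) atTop (𝓝 0) := by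
      refine squeeze_zero_norm hbd ?_
      have := hnorm0.const_mul L
      simpa using this
    have := h0.add_const (ψ xb)
    simpa using this
  -- the transformed base sequence
  set zs : ℕ → E × ℝ := fun k => (((xs' k).1, (xs' k).2 - ψ ((xs' k).1)) : E × ℝ) with hzs_def
  have hzmem : ∀ k, zs k ∈ epiF φA := by
    intro k
    have h2 : (((xs' k).1, (xs' k).2) : E × ℝ) ∈ epiF (fun z => φA z + ((ψ z : ℝ) : EReal)) :=
      hmem (k + K)
    exact (mem_epi_add_iff φA ψ _ _).mp h2
  have hzt : Tendsto zs atTop (𝓝 ((xb, cA) : E × ℝ)) := by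
    have h1 : Tendsto (fun k => (xs' k).2 - ψ ((xs' k).1)) atTop (𝓝 (cA + ψ xb - ψ xb)) :=
      hx2'.sub hψt
    have h2 : (cA + ψ xb - ψ xb : ℝ) = cA := by ring
    rw [h2] at h1
    exact hx1'.prodMk_nhds h1
  -- ε-normal property of the transformed normals
  set ε : ℕ → ℝ := fun k => |(vs' k).2| * L with hε_def
  have hεt : Tendsto ε atTop (𝓝 0) := by
    have h1 : Tendsto (fun k => |(vs' k).2|) atTop (𝓝 0) := by
      have := hv2'.abs; simpa using this
    have := h1.mul_const L
    simpa using this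
  have hev : ∀ k, ∀ e : ℝ, 0 < e → ∃ δ, 0 < δ ∧
      ∀ u ∈ epiF φA, ‖u - zs k‖ < δ → ⟪vs' k, u - zs k⟫ ≤ (e + ε k) * ‖u - zs k‖ := by
    intro k
    have hNk : vs' k ∈ preNC (epiF (fun z => φA z + ((ψ z : ℝ) : EReal)))
        (((xs' k).1, (xs' k).2) : E × ℝ) := hpre (k + K)
    exact transfer φA ψ L r₀ hL xb hr₀ hlip ((xs' k).1) ((xs' k).2) (hball' k) (vs' k) hNk
  -- closedness of the epigraph near (xb, cA)
  have hclball : IsClosed (epiF φA ∩ Metric.closedBall ((xb, cA) : E × ℝ) rc) := by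
    have hsub : Metric.closedBall ((xb, cA) : E × ℝ) rc ⊆
        Metric.closedBall xb rc ×ˢ (Set.univ : Set ℝ) := by
      intro p hp
      rw [Metric.mem_closedBall] at hp
      refine ⟨?_, Set.mem_univ _⟩
      rw [Metric.mem_closedBall]
      refine le_trans ?_ hp
      rw [Prod.dist_eq]
      exact le_max_left _ _
    have heq : epiF φA ∩ Metric.closedBall ((xb, cA) : E × ℝ) rc =
        (epiF φA ∩ (Metric.closedBall xb rc ×ˢ (Set.univ : Set ℝ))) ∩
          Metric.closedBall ((xb, cA) : E × ℝ) rc := by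
      ext p
      constructor
      · rintro ⟨h1, h2⟩; exact ⟨⟨h1, hsub h2⟩, h2⟩
      · rintro ⟨⟨h1, _⟩, h2⟩; exact ⟨h1, h2⟩
    rw [heq]
    exact hcl.inter Metric.isClosed_closedBall
  -- conclude via the limiting construction
  exact lemA (epiF φA) ((xb, cA) : E × ℝ) ((v, (0:ℝ)) : E × ℝ) rc hrc hclball
    zs vs' ε hzmem hev hzt hvs' hεt

end MainIncl

lemma ereal_coe_sum {m : ℕ} (f : Fin m → ℝ) :
    ((∑ i, f i : ℝ) : EReal) = ∑ i, ((f i : ℝ) : EReal) :=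
  map_sum (⟨⟨Real.toEReal, rfl⟩, fun x y => EReal.coe_add x y⟩ : ℝ →+ EReal) f Finset.univ

set_option maxHeartbeats 2000000 in
/-- Singular subdifferential sum rule, with equality. -/
theorem singular_subdiff_sum_rule {n m : ℕ} (hm : 1 ≤ m)
    (φ₁ : EuclideanSpace ℝ (Fin n) → EReal) (φ : Fin m → EuclideanSpace ℝ (Fin n) → ℝ) (xbar : EuclideanSpace ℝ (Fin n))
    (hbot : ∀ u, φ₁ u ≠ ⊥) (hdom : φ₁ xbar ≠ ⊤)
    (hlsc : LscAround φ₁ xbar) (hlip : ∀ i, LipschitzAround (φ i) xbar) :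
    singSubdiff (fun u => φ₁ u + ∑ i, ((φ i u : ℝ) : EReal)) xbar
      = singSubdiff φ₁ xbar := by
  classical
  set ψ : EuclideanSpace ℝ (Fin n) → ℝ := fun u => ∑ i, φ i u with hψ_def
  have hAB : (fun u => φ₁ u + ∑ i, ((φ i u : ℝ) : EReal))
      = (fun u => φ₁ u + ((ψ u : ℝ) : EReal)) := by
    funext u
    rw [hψ_def]
    rw [ereal_coe_sum]
  -- combine the Lipschitz properties
  choose Li Ui hUi hLi using hlip
  have hUall : (⋂ i, Ui i) ∈ 𝓝 xbar := Filter.iInter_mem.mpr hUi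
  obtain ⟨V, hVsub, hVopen, hVmem⟩ := mem_nhds_iff.mp hUall
  obtain ⟨r₀, hr₀, hball⟩ := Metric.isOpen_iff.mp hVopen xbar hVmem
  set L : ℝ := ∑ i, |Li i| with hL_def
  have hL : 0 ≤ L := Finset.sum_nonneg fun i _ => abs_nonneg _
  have hlipψ : ∀ u ∈ Metric.ball xbar r₀, ∀ w ∈ Metric.ball xbar r₀,
      |ψ u - ψ w| ≤ L * ‖u - w‖ := by
    intro u hu w hw
    have hu' : ∀ i, u ∈ Ui i := fun i => Set.mem_iInter.mp (hVsub (hball hu)) i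
    have hw' : ∀ i, w ∈ Ui i := fun i => Set.mem_iInter.mp (hVsub (hball hw)) i
    calc |ψ u - ψ w| = |∑ i, (φ i u - φ i w)| := by rw [hψ_def, Finset.sum_sub_distrib]
      _ ≤ ∑ i, |φ i u - φ i w| := Finset.abs_sum_le_sum_abs _ _
      _ ≤ ∑ i, |Li i| * ‖u - w‖ := by
          refine Finset.sum_le_sum fun i _ => ?_
          refine le_trans (hLi i u (hu' i) w (hw' i)) ?_
          exact mul_le_mul_of_nonneg_right (le_abs_self _) (norm_nonneg _)
      _ = L * ‖u - w‖ := by rw [hL_def, Finset.sum_mul]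
  -- closedness of the epigraph of φ₁
  obtain ⟨rc, hrc, hcl⟩ := epi_locally_closed φ₁ xbar hlsc
  -- direction 1 : singSubdiff (φ₁ + ψ) ⊆ singSubdiff φ₁
  have incl1 : singSubdiff (fun z => φ₁ z + ((ψ z : ℝ) : EReal)) xbar ⊆ singSubdiff φ₁ xbar :=
    sing_incl φ₁ ψ xbar L r₀ hL hr₀ hlipψ hdom (hbot xbar) rc hrc hcl
  -- direction 2 : singSubdiff φ₁ ⊆ singSubdiff (φ₁ + ψ)
  set φB : EuclideanSpace ℝ (Fin n) → EReal := fun z => φ₁ z + ((ψ z : ℝ) : EReal) with hφB_def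
  have hfinB : φB xbar ≠ ⊤ := ereal_add_coe_ne_top _ _ hdom
  have hbotB : φB xbar ≠ ⊥ := ereal_add_coe_ne_bot _ _ (hbot xbar)
  obtain ⟨rc', hrc', hcl'⟩ := epi_add_locally_closed φ₁ ψ xbar L r₀ rc hr₀ hrc hlipψ hcl
  have hlipψ' : ∀ u ∈ Metric.ball xbar r₀, ∀ w ∈ Metric.ball xbar r₀,
      |(fun z => -ψ z) u - (fun z => -ψ z) w| ≤ L * ‖u - w‖ := by
    intro u hu w hw
    have h := hlipψ w hw u hu
    have heq : |(fun z => -ψ z) u - (fun z => -ψ z) w| = |ψ w - ψ u| := by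
      show |(-ψ u) - (-ψ w)| = |ψ w - ψ u|
      congr 1
      ring
    rw [heq]
    rw [norm_sub_rev] at h
    exact h
  have hAB2 : (fun z => φB z + (((fun z => -ψ z) z : ℝ) : EReal)) = φ₁ := by
    funext z
    show (φ₁ z + ((ψ z : ℝ) : EReal)) + ((-ψ z : ℝ) : EReal) = φ₁ z
    exact ereal_add_coe_add_neg (φ₁ z) (ψ z)
  have incl2 : singSubdiff φ₁ xbar ⊆ singSubdiff φB xbar := by
    have h := sing_incl φB (fun z => -ψ z) xbar L r₀ hL hr₀ hlipψ' hfinB hbotB rc' hrc' hcl'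
    rwa [hAB2] at h
  rw [hAB]
  exact Set.Subset.antisymm incl1 incl2

end
end

section
/- Let x̄ be a feasible solution to the mathematical program: minimize φ₀(x) subject to φᵢ(x) ≤ 0 for i = 1,…,m, that is a local minimizer, where all functions φᵢ : ℝⁿ → ℝ, i = 0,…,m, are locally Lipschitzian around x̄. Then there exist multipliers λ₀,…,λₘ satisfying the sign conditions λᵢ ≥ 0 for all i = 0,…,m, the nontriviality condition λ₀ + … + λₘ ≠ 0, the complementary slackness conditions λᵢφᵢ(x̄) = 0 for i = 1,…,m, and the subdifferential Lagrangian inclusion 0 ∈ Σ_{i=0}^{m} λᵢ∂φᵢ(x̄). -/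
open Filter Topology RealInnerProductSpace

noncomputable section

variable {E Y : Type*}

open Metric

section Aux

variable [NormedAddCommGroup E] [InnerProductSpace ℝ E]

/-- Real-form Fréchet subdifferential. -/
def myFS (φ : E → ℝ) (x : E) : Set E :=
  {v | ∀ ε : ℝ, 0 < ε → ∃ δ : ℝ, 0 < δ ∧
    ∀ u : E, ‖u - x‖ < δ → ⟪v, u - x⟫ ≤ φ u - φ x + ε * ‖u - x‖}

lemma mem_myFS_of_quad {φ : E → ℝ} {x w : E} {C ρ : ℝ} (hC : 0 ≤ C) (hρ : 0 < ρ)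
    (h : ∀ u ∈ ball x ρ, ⟪w, u - x⟫ - C * ‖u - x‖ ^ 2 ≤ φ u - φ x) :
    w ∈ myFS φ x := by
  intro ε hε
  refine ⟨min ρ (ε / (C + 1)), by positivity, fun u hu => ?_⟩
  have h1 : ‖u - x‖ < ρ := lt_of_lt_of_le hu (min_le_left _ _)
  have h2 : ‖u - x‖ ≤ ε / (C + 1) := le_of_lt (lt_of_lt_of_le hu (min_le_right _ _))
  have h3 := h u (by rwa [mem_ball, dist_eq_norm])
  have hc1 : (0:ℝ) < C + 1 := by linarith
  have hn : (0:ℝ) ≤ ‖u - x‖ := norm_nonneg _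
  have h2' : C * ‖u - x‖ ≤ C * (ε / (C+1)) := mul_le_mul_of_nonneg_left h2 hC
  have h2'' : C * (ε / (C+1)) ≤ ε := by
    have he : (C+1) * (ε/(C+1)) = ε := by field_simp
    nlinarith [div_nonneg hε.le hc1.le]
  have h4 : C * ‖u - x‖ ^ 2 ≤ ε * ‖u - x‖ := by nlinarith
  linarith

lemma myFS_mem_preNC {φ : E → ℝ} {x v : E} (hv : v ∈ myFS φ x) :
    ((v, (-1:ℝ)) : E × ℝ) ∈ preNC (epiF fun u => ((φ u : ℝ) : EReal)) (x, φ x) := by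
  intro ε hε
  obtain ⟨δ, hδ, hd⟩ := hv ε hε
  refine ⟨δ, hδ, ?_⟩
  rintro ⟨u, μ⟩ hmem hn
  have hmem' : φ u ≤ μ := by
    simp only [epiF, Set.mem_setOf_eq] at hmem
    exact_mod_cast hmem
  have hle : ‖u - x‖ ≤ ‖((u,μ) : E × ℝ) - (x, φ x)‖ := norm_fst_le (((u,μ) : E × ℝ) - (x, φ x))
  have h1 := hd u (lt_of_le_of_lt hle hn)
  have hinner : (inner ℝ ((v, (-1:ℝ)) : E × ℝ) (((u,μ) : E × ℝ) - (x, φ x)) : ℝ)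
      = (inner ℝ v (u - x) : ℝ) + (-1) * (μ - φ x) := by
    show inner ℝ v (u - x) + inner ℝ (-1:ℝ) (μ - φ x) = _; rw [Real.inner_apply]
  show (inner ℝ ((v, (-1:ℝ)) : E × ℝ) (((u,μ) : E × ℝ) - (x, φ x)) : ℝ) ≤ _
  rw [hinner]
  have h2 : ε * ‖u - x‖ ≤ ε * ‖((u,μ):E×ℝ) - (x,φ x)‖ := mul_le_mul_of_nonneg_left hle hε.le
  linarith

lemma myFS_lim_mem {φ : E → ℝ} {xb v : E} (hc : ContinuousAt φ xb)
    (xs vs : ℕ → E) (hxs : Tendsto xs atTop (𝓝 xb)) (hvs : Tendsto vs atTop (𝓝 v))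
    (hFS : ∀ k, vs k ∈ myFS φ (xs k)) : v ∈ basicSubdiffR φ xb := by
  show ((v, (-1:ℝ)) : E × ℝ) ∈ limNC _ (xb, (((φ xb : ℝ) : EReal)).toReal)
  rw [EReal.toReal_coe]
  exact ⟨fun k => (xs k, φ (xs k)), fun k => (vs k, -1),
    fun k => le_refl ((φ (xs k) : ℝ) : EReal), fun k => myFS_mem_preNC (hFS k),
    hxs.prodMk_nhds (hc.tendsto.comp hxs), hvs.prodMk_nhds tendsto_const_nhds⟩

lemma myFS_norm_le {φ : E → ℝ} {x v : E} {L ρ : ℝ} (hρ : 0 < ρ) (hL : 0 ≤ L)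
    (hlip : ∀ u ∈ ball x ρ, |φ u - φ x| ≤ L * ‖u - x‖) (hv : v ∈ myFS φ x) : ‖v‖ ≤ L := by
  by_contra hlt
  push_neg at hlt
  have hvn : 0 < ‖v‖ := lt_of_le_of_lt hL hlt
  set ε := (‖v‖ - L)/2 with hεdef
  have hε : 0 < ε := by simp only [hεdef]; linarith
  obtain ⟨δ, hδ, hd⟩ := hv ε hε
  set t := min δ ρ / 2 with htdef
  have ht0 : 0 < t := by positivity
  set u := x + (t / ‖v‖) • v with hudef
  have hun : u - x = (t/‖v‖) • v := by simp [hudef]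
  have hnorm : ‖u - x‖ = t := by
    rw [hun, norm_smul, Real.norm_eq_abs, abs_of_pos (by positivity), div_mul_cancel₀ _ hvn.ne']
  have h1 : ‖u - x‖ < δ := by
    rw [hnorm]; have := min_le_left δ ρ; simp only [htdef]; linarith
  have h2 : u ∈ ball x ρ := by
    rw [mem_ball, dist_eq_norm, hnorm]
    have := min_le_right δ ρ; simp only [htdef]; linarith
  have h3 := hd u h1
  have h4 := hlip u h2
  have h5 : ⟪v, u - x⟫ = t * ‖v‖ := by
    rw [hun, real_inner_smul_right, real_inner_self_eq_norm_sq]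
    field_simp
  rw [h5, hnorm] at h3
  rw [hnorm] at h4
  have h6 : φ u - φ x ≤ L * t := le_trans (le_abs_self _) h4
  have : t * ‖v‖ ≤ L * t + ε * t := by linarith
  nlinarith

lemma sq_max_le (a b : ℝ) :
    max a 0 ^ 2 ≤ max b 0 ^ 2 + 2 * max b 0 * (a - b) + (a - b) ^ 2 := by
  rcases le_or_gt a 0 with ha | ha <;> rcases le_or_gt b 0 with hb | hb
  · rw [max_eq_right ha, max_eq_right hb]; nlinarith
  · rw [max_eq_right ha, max_eq_left hb.le]; nlinarith
  · rw [max_eq_left ha.le, max_eq_right hb]; nlinarith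
  · rw [max_eq_left ha.le, max_eq_left hb.le]; nlinarith

lemma norm_sub_sq_expand (u z a : E) :
    ‖u - a‖ ^ 2 = ‖z - a‖ ^ 2 + 2 * ⟪z - a, u - z⟫ + ‖u - z‖ ^ 2 := by
  have h : u - a = (z - a) + (u - z) := by abel
  rw [h, norm_add_sq_real]

/-- Active block of the decoupled penalty scheme. -/
lemma active_block {ψ : E → ℝ} {z a : E} {c L ρ : ℝ} (hc : 0 < c) (hρ : 0 < ρ) (hL : 0 ≤ L)
    (hb : 0 < ψ z)
    (hlip : ∀ w ∈ ball z ρ, |ψ w - ψ z| ≤ L * ‖w - z‖)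
    (hmin : ∀ w ∈ ball z ρ,
      c * max (ψ z) 0 ^ 2 + c * ‖z - a‖ ^ 2 ≤ c * max (ψ w) 0 ^ 2 + c * ‖w - a‖ ^ 2) :
    (ψ z)⁻¹ • (a - z) ∈ myFS ψ z := by
  set b := ψ z with hbdef
  apply mem_myFS_of_quad (C := (1 + L^2)/(2*b)) (by positivity) hρ
  intro u hu
  have h1 := hmin u hu
  have h2 : max (ψ u) 0 ^ 2 ≤ max b 0 ^ 2 + 2 * max b 0 * (ψ u - b) + (ψ u - b) ^ 2 :=
    sq_max_le _ _
  have h3 : (ψ u - b) ^ 2 ≤ L ^ 2 * ‖u - z‖ ^ 2 := by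
    have := hlip u hu
    nlinarith [abs_nonneg (ψ u - b), sq_abs (ψ u - b), norm_nonneg (u - z)]
  have h4 := norm_sub_sq_expand u z a
  rw [max_eq_left hb.le] at h1 h2
  -- combine: 0 ≤ 2*b*(ψ u - b) + 2*⟪z - a, u - z⟫ + (1+L^2)*‖u-z‖^2
  have key : 0 ≤ 2 * b * (ψ u - b) + 2 * ⟪z - a, u - z⟫ + (1 + L ^ 2) * ‖u - z‖ ^ 2 := by
    nlinarith [h1, h2, h3, h4, hc]
  have hb0 : (0:ℝ) < b := hb
  have hJ : ⟪(b⁻¹ • (a - z) : E), u - z⟫ = b⁻¹ * ⟪a - z, u - z⟫ := real_inner_smul_left _ _ _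
  have hflip : ⟪(a - z : E), u - z⟫ = - ⟪z - a, u - z⟫ := by
    rw [show (a - z : E) = -(z - a) by abel, inner_neg_left]
  rw [hJ, hflip]
  set I := ⟪(z - a : E), u - z⟫ with hIdef
  set r2 := ‖u - z‖ ^ 2 with hr2def
  have key3 : -I ≤ b * (ψ u - b) + (1 + L ^ 2) / 2 * r2 := by linarith
  have step : b⁻¹ * (-I) ≤ b⁻¹ * (b * (ψ u - b) + (1 + L ^ 2) / 2 * r2) :=
    mul_le_mul_of_nonneg_left key3 (inv_nonneg.2 hb0.le)
  have heq : b⁻¹ * (b * (ψ u - b) + (1 + L ^ 2) / 2 * r2)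
      = (ψ u - b) + (1 + L ^ 2) / (2 * b) * r2 := by
    field_simp
    try ring
  rw [heq] at step
  have : b⁻¹ * (-I) = b⁻¹ * -I := by ring
  linarith [step]

/-- Inactive block of the decoupled penalty scheme. -/
lemma inactive_block {ψ : E → ℝ} {z a : E} {c L ρ : ℝ} (hc : 0 < c) (hρ : 0 < ρ) (hL : 0 ≤ L)
    (hb : ψ z ≤ 0)
    (hlip : ∀ w ∈ ball z ρ, |ψ w - ψ z| ≤ L * ‖w - z‖)
    (hmin : ∀ w ∈ ball z ρ,
      c * max (ψ z) 0 ^ 2 + c * ‖z - a‖ ^ 2 ≤ c * max (ψ w) 0 ^ 2 + c * ‖w - a‖ ^ 2) :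
    z = a := by
  by_contra hza
  have hD : 0 < ‖a - z‖ := by
    rw [norm_pos_iff, sub_ne_zero]; exact fun h => hza h.symm
  set D := ‖a - z‖ with hDdef
  set t := min (1/(L^2+1)) (min 1 (ρ/(2*D))) with htdef
  have ht0 : 0 < t := by
    apply lt_min (by positivity) (lt_min one_pos (by positivity))
  have ht1 : t ≤ 1 := le_trans (min_le_right _ _) (min_le_left _ _)
  have htL : (L^2+1) * t ≤ 1 := by
    have h := min_le_left (1/(L^2+1)) (min 1 (ρ/(2*D)))
    rw [← htdef] at h
    have hL1 : (0:ℝ) < L^2+1 := by positivity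
    calc (L^2+1) * t ≤ (L^2+1) * (1/(L^2+1)) := mul_le_mul_of_nonneg_left h hL1.le
    _ = 1 := by field_simp
  have htρ : t * D < ρ := by
    have h := le_trans (min_le_right (1/(L^2+1)) _) (min_le_right 1 (ρ/(2*D)))
    rw [← htdef] at h
    have hDne : D ≠ 0 := hD.ne'
    have : t * D ≤ ρ/2 := by
      calc t * D ≤ ρ/(2*D) * D := mul_le_mul_of_nonneg_right h hD.le
      _ = ρ/2 := by field_simp; try ring
    linarith
  set w := z + t • (a - z) with hwdef
  have hwz : w - z = t • (a - z) := by simp [hwdef]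
  have hwnorm : ‖w - z‖ = t * D := by
    rw [hwz, norm_smul, Real.norm_eq_abs, abs_of_pos ht0]
  have hwball : w ∈ ball z ρ := by rw [mem_ball, dist_eq_norm, hwnorm]; exact htρ
  have hwa : w - a = (t - 1) • (a - z) := by
    rw [hwdef]; module
  have hwanorm : ‖w - a‖ = (1 - t) * D := by
    rw [hwa, norm_smul, Real.norm_eq_abs, abs_of_nonpos (by linarith)]
    ring
  have h1 := hmin w hwball
  rw [max_eq_right hb] at h1
  have h2 : max (ψ w) 0 ≤ L * (t * D) := by
    have hl := hlip w hwball
    rw [hwnorm] at hl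
    have : ψ w ≤ L * (t * D) := by
      have := le_trans (le_abs_self _) hl; linarith
    exact max_le this (by positivity)
  have h3 : max (ψ w) 0 ^ 2 ≤ (L * (t * D))^2 := by
    nlinarith [le_max_right (ψ w) 0]
  rw [hwanorm] at h1
  have hzaD : ‖z - a‖ = D := norm_sub_rev z a
  rw [hzaD] at h1
  have h4 : D ^ 2 ≤ (L * (t * D))^2 + ((1-t)*D)^2 := by
    nlinarith [h1, mul_le_mul_of_nonneg_left h3 hc.le, hc]
  have hTD : 0 < t * D^2 := by positivity
  have h5 : ((L^2+1)*t) * (t * D^2) ≤ 1 * (t * D^2) := mul_le_mul_of_nonneg_right htL hTD.le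
  nlinarith [h4, h5, hTD]

lemma contOn_of_ptlip {φ : E → ℝ} {s : Set E} {L : ℝ} (hL : 0 ≤ L)
    (h : ∀ u ∈ s, ∀ w ∈ s, |φ u - φ w| ≤ L * ‖u - w‖) : ContinuousOn φ s := by
  intro z hz
  rw [Metric.continuousWithinAt_iff]
  intro ε hε
  refine ⟨ε / (L + 1), by positivity, fun u hu hd => ?_⟩
  have h1 := h u hu z hz
  rw [Real.dist_eq]
  have h2 : ‖u - z‖ = dist u z := (dist_eq_norm u z).symm
  calc |φ u - φ z| ≤ L * ‖u - z‖ := h1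
    _ = L * dist u z := by rw [h2]
    _ ≤ L * (ε / (L+1)) := mul_le_mul_of_nonneg_left hd.le hL
    _ < ε := by
        have he : (L+1) * (ε/(L+1)) = ε := by field_simp
        nlinarith [div_nonneg hε.le (by positivity : (0:ℝ) ≤ L + 1)]

lemma lipAround_elim {φ : E → ℝ} {xb : E} (h : LipschitzAround φ xb) :
    ∃ L r : ℝ, 0 ≤ L ∧ 0 < r ∧
      ∀ u ∈ closedBall xb (2*r), ∀ w ∈ closedBall xb (2*r), |φ u - φ w| ≤ L * ‖u - w‖ := by
  obtain ⟨L, U, hU, hL⟩ := h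
  obtain ⟨ρ, hρ, hball⟩ := Metric.mem_nhds_iff.mp hU
  refine ⟨max L 0, ρ/3, le_max_right _ _, by linarith, fun u hu w hw => ?_⟩
  have hsub : closedBall xb (2*(ρ/3)) ⊆ U := fun y hy => by
    apply hball
    rw [mem_closedBall] at hy
    rw [mem_ball]
    linarith
  calc |φ u - φ w| ≤ L * ‖u - w‖ := hL u (hsub hu) w (hsub hw)
    _ ≤ max L 0 * ‖u - w‖ := mul_le_mul_of_nonneg_right (le_max_left _ _) (norm_nonneg _)

lemma basicSubdiffR_nonempty [FiniteDimensional ℝ E] {φ : E → ℝ} {xb : E}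
    (h : LipschitzAround φ xb) : (basicSubdiffR φ xb).Nonempty := by
  obtain ⟨L, r, hL, hr, hlip⟩ := lipAround_elim h
  haveI : ProperSpace E := FiniteDimensional.proper ℝ E
  have hsub : closedBall xb r ⊆ closedBall xb (2*r) :=
    closedBall_subset_closedBall (by linarith)
  have hcont : ContinuousOn φ (closedBall xb (2*r)) := contOn_of_ptlip hL hlip
  have hcont' : ContinuousOn φ (closedBall xb r) := hcont.mono hsub
  -- minimizers of the penalized functions
  have hex : ∀ k : ℕ, ∃ z ∈ closedBall xb r,
      IsMinOn (fun u => φ u + (k+1 : ℝ) * ‖u - xb‖^2) (closedBall xb r) z := by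
    intro k
    apply IsCompact.exists_isMinOn (isCompact_closedBall xb r)
      ⟨xb, mem_closedBall_self hr.le⟩
    exact hcont'.add (Continuous.continuousOn (by continuity))
  choose z hzK hzmin using hex
  -- distance bound
  have hd : ∀ k : ℕ, (k+1 : ℝ) * ‖z k - xb‖^2 ≤ L * ‖z k - xb‖ := by
    intro k
    have h1 := hzmin k (mem_closedBall_self hr.le)
    simp only [sub_self, norm_zero] at h1
    have h2 : φ (z k) + (k+1 : ℝ) * ‖z k - xb‖^2 ≤ φ xb := by
      simpa using h1
    have h3 : |φ xb - φ (z k)| ≤ L * ‖xb - z k‖ :=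
      hlip xb (mem_closedBall_self (by linarith)) (z k) (hsub (hzK k))
    have h4 : φ xb - φ (z k) ≤ L * ‖z k - xb‖ := by
      rw [norm_sub_rev] at h3
      exact le_trans (le_abs_self _) h3
    linarith
  have hdk : ∀ k : ℕ, ‖z k - xb‖ ≤ L / (k+1 : ℝ) := by
    intro k
    have hk : (0:ℝ) < (k+1:ℝ) := by positivity
    rcases eq_or_lt_of_le (norm_nonneg (z k - xb)) with h0 | h0
    · rw [← h0]; positivity
    · have := hd k
      rw [le_div_iff₀ hk]
      nlinarith
  have hzlim : Tendsto z atTop (𝓝 xb) := by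
    rw [tendsto_iff_norm_sub_tendsto_zero]
    apply squeeze_zero (fun k => norm_nonneg _) hdk
    have : Tendsto (fun k : ℕ => L * (1/(k+1:ℝ))) atTop (𝓝 (L * 0)) :=
      tendsto_const_nhds.mul tendsto_one_div_add_atTop_nhds_zero_nat
    simpa [div_eq_mul_inv, one_div] using this
  obtain ⟨N, hN⟩ := eventually_atTop.mp (Metric.tendsto_nhds.mp hzlim (r/2) (by positivity))
  set z' : ℕ → E := fun j => z (j + N) with hz'def
  set w' : ℕ → E := fun j => (-(2*(((j + N : ℕ):ℝ)+1))) • (z (j + N) - xb) with hw'def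
  have hFS : ∀ j, w' j ∈ myFS φ (z' j) := by
    intro j
    set k := j + N with hkdef
    set c : ℝ := ((k:ℝ)+1) with hcdef
    have hc : (0:ℝ) < c := by positivity
    apply mem_myFS_of_quad (C := c) hc.le (by positivity : (0:ℝ) < r/2)
    intro u hu
    have huK : u ∈ closedBall xb r := by
      rw [mem_closedBall]
      have h1 : dist u (z k) < r/2 := hu
      have h2 : dist (z k) xb < r/2 := hN k (Nat.le_add_left N j)
      calc dist u xb ≤ dist u (z k) + dist (z k) xb := dist_triangle _ _ _
        _ ≤ r := by linarith
    have hm := hzmin k huK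
    have hm' : φ (z k) + c * ‖z k - xb‖^2 ≤ φ u + c * ‖u - xb‖^2 := hm
    have hexp := norm_sub_sq_expand u (z k) xb
    have hinner : ⟪w' j, u - z k⟫ = -(2*c) * ⟪z k - xb, u - z k⟫ := by
      simp only [hw'def, real_inner_smul_left, hcdef, hkdef] <;> ring_nf
    show ⟪w' j, u - z k⟫ - c * ‖u - z k‖^2 ≤ φ u - φ (z k)
    rw [hinner]
    nlinarith [hm', hexp]
  have hwb : ∀ j, w' j ∈ closedBall (0:E) (2*L) := by
    intro j
    rw [mem_closedBall, dist_zero_right, hw'def]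
    have hk : (0:ℝ) < ((j+N:ℕ):ℝ)+1 := by positivity
    rw [norm_smul, Real.norm_eq_abs, abs_neg, abs_of_pos (by positivity)]
    have := hdk (j+N)
    calc (2*(((j+N:ℕ):ℝ)+1)) * ‖z (j+N) - xb‖ ≤ (2*(((j+N:ℕ):ℝ)+1)) * (L / (((j+N:ℕ):ℝ)+1)) := by
          apply mul_le_mul_of_nonneg_left _ (by positivity)
          exact_mod_cast this
      _ = 2*L := by field_simp
  obtain ⟨v, hvK, g, hg, hconv⟩ := IsCompact.tendsto_subseq (isCompact_closedBall (0:E) (2*L)) hwb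
  have hz'lim : Tendsto z' atTop (𝓝 xb) := hzlim.comp (tendsto_add_atTop_nat N)
  have hcontAt : ContinuousAt φ xb :=
    hcont.continuousAt (Metric.closedBall_mem_nhds xb (by positivity : (0:ℝ) < 2*r))
  exact ⟨v, myFS_lim_mem hcontAt (fun t => z' (g t)) (w' ∘ g)
    (hz'lim.comp hg.tendsto_atTop) hconv (fun t => hFS (g t))⟩

end Aux

set_option maxHeartbeats 1000000

/-- Fritz John type necessary optimality conditions for Lipschitzian programs. -/
theorem lipschitz_program_necessary {n m : ℕ}
    (φ₀ : EuclideanSpace ℝ (Fin n) → ℝ) (φ : Fin m → EuclideanSpace ℝ (Fin n) → ℝ) (xbar : EuclideanSpace ℝ (Fin n))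
    (hfeas : ∀ i, φ i xbar ≤ 0)
    (hmin : ∃ U ∈ 𝓝 xbar, ∀ u ∈ U, (∀ i, φ i u ≤ 0) → φ₀ xbar ≤ φ₀ u)
    (hlip₀ : LipschitzAround φ₀ xbar) (hlip : ∀ i, LipschitzAround (φ i) xbar) :
    ∃ (l₀ : ℝ) (l : Fin m → ℝ),
      (0 ≤ l₀ ∧ ∀ i, 0 ≤ l i) ∧
      (l₀ + ∑ i, l i ≠ 0) ∧
      (∀ i, l i * φ i xbar = 0) ∧
      ∃ (v₀ : EuclideanSpace ℝ (Fin n)) (v : Fin m → EuclideanSpace ℝ (Fin n)),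
        v₀ ∈ basicSubdiffR φ₀ xbar ∧ (∀ i, v i ∈ basicSubdiffR (φ i) xbar) ∧
        l₀ • v₀ + ∑ i, l i • v i = 0 := by
  classical
  obtain ⟨U₀, hU₀, hopt⟩ := hmin
  obtain ⟨r₀, hr₀, hball₀⟩ := Metric.mem_nhds_iff.mp hU₀
  obtain ⟨L0, r0, hL0, hr0, hlip0⟩ := lipAround_elim hlip₀
  have hl := fun i => lipAround_elim (hlip i)
  choose Lf rf hLf hrf hlf using hl
  -- uniform radius and Lipschitz constant
  set rfam : Fin (m+1) → ℝ := Fin.cons r0 rf with hrfam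
  set Lfam : Fin (m+1) → ℝ := Fin.cons L0 Lf with hLfam
  have hne : (Finset.univ : Finset (Fin (m+1))).Nonempty := ⟨0, Finset.mem_univ 0⟩
  set r : ℝ := min (Finset.univ.inf' hne rfam) (r₀/3) with hrdef
  set L : ℝ := Finset.univ.sup' hne Lfam with hLdef
  have hrfam0 : rfam 0 = r0 := by simp [hrfam]
  have hrfams : ∀ i, rfam (Fin.succ i) = rf i := fun i => by simp [hrfam]
  have hLfam0 : Lfam 0 = L0 := by simp [hLfam]
  have hLfams : ∀ i, Lfam (Fin.succ i) = Lf i := fun i => by simp [hLfam]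
  have hr : 0 < r := by
    apply lt_min _ (by linarith)
    rw [Finset.lt_inf'_iff]
    intro i _
    exact Fin.cases (motive := fun i => 0 < rfam i)
      (by show 0 < rfam 0; rw [hrfam0]; exact hr0)
      (fun i => by show 0 < rfam i.succ; rw [hrfams i]; exact hrf i) i
  have hrle0 : r ≤ r0 :=
    le_trans (min_le_left _ _) (le_trans (Finset.inf'_le rfam (Finset.mem_univ 0)) hrfam0.le)
  have hrlei : ∀ i, r ≤ rf i := fun i =>
    le_trans (min_le_left _ _)
      (le_trans (Finset.inf'_le rfam (Finset.mem_univ (Fin.succ i))) (hrfams i).le)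
  have hL0le : L0 ≤ L :=
    le_trans hLfam0.ge (Finset.le_sup' Lfam (Finset.mem_univ 0))
  have hLlei : ∀ i, Lf i ≤ L := fun i =>
    le_trans (hLfams i).ge (Finset.le_sup' Lfam (Finset.mem_univ (Fin.succ i)))
  have hL : 0 ≤ L := le_trans hL0 hL0le
  -- uniform facts on the ball of radius 2r
  have hlip0' : ∀ u ∈ Metric.closedBall xbar (2*r), ∀ w ∈ Metric.closedBall xbar (2*r),
      |φ₀ u - φ₀ w| ≤ L * ‖u - w‖ := by
    intro u hu w hw
    have hs : Metric.closedBall xbar (2*r) ⊆ Metric.closedBall xbar (2*r0) :=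
      Metric.closedBall_subset_closedBall (by linarith)
    exact le_trans (hlip0 u (hs hu) w (hs hw))
      (mul_le_mul_of_nonneg_right hL0le (norm_nonneg _))
  have hlipi' : ∀ i, ∀ u ∈ Metric.closedBall xbar (2*r), ∀ w ∈ Metric.closedBall xbar (2*r),
      |φ i u - φ i w| ≤ L * ‖u - w‖ := by
    intro i u hu w hw
    have hs : Metric.closedBall xbar (2*r) ⊆ Metric.closedBall xbar (2*(rf i)) :=
      Metric.closedBall_subset_closedBall (by have := hrlei i; linarith)
    exact le_trans (hlf i u (hs hu) w (hs hw))
      (mul_le_mul_of_nonneg_right (hLlei i) (norm_nonneg _))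
  have hopt' : ∀ u ∈ Metric.closedBall xbar (2*r), (∀ i, φ i u ≤ 0) → φ₀ xbar ≤ φ₀ u := by
    intro u hu hf
    apply hopt u _ hf
    apply hball₀
    rw [Metric.mem_ball]
    rw [Metric.mem_closedBall] at hu
    have : r ≤ r₀/3 := min_le_right _ _
    linarith
  have hc0 : ContinuousOn φ₀ (Metric.closedBall xbar (2*r)) := contOn_of_ptlip hL hlip0'
  have hci : ∀ i, ContinuousOn (φ i) (Metric.closedBall xbar (2*r)) :=
    fun i => contOn_of_ptlip hL (hlipi' i)
  have hsub12 : Metric.closedBall xbar r ⊆ Metric.closedBall xbar (2*r) :=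
    Metric.closedBall_subset_closedBall (by linarith)
  have hcAt : ∀ y ∈ Metric.closedBall xbar r, ContinuousAt φ₀ y := by
    intro y hy
    apply hc0.continuousAt
    apply Metric.closedBall_mem_nhds_of_mem
    rw [Metric.mem_ball]
    rw [Metric.mem_closedBall] at hy
    linarith
  have hcAti : ∀ (i : Fin m), ∀ y ∈ Metric.closedBall xbar r, ContinuousAt (φ i) y := by
    intro i y hy
    apply (hci i).continuousAt
    apply Metric.closedBall_mem_nhds_of_mem
    rw [Metric.mem_ball]
    rw [Metric.mem_closedBall] at hy
    linarith
  -- the decoupled penalized functions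
  set K : Set (EuclideanSpace ℝ (Fin n) × (Fin m → EuclideanSpace ℝ (Fin n))) :=
    (Metric.closedBall xbar r) ×ˢ (Set.univ.pi fun _ : Fin m => Metric.closedBall xbar r)
    with hKdef
  have hKcomp : IsCompact K := (isCompact_closedBall _ _).prod
    (isCompact_univ_pi fun _ => isCompact_closedBall _ _)
  have hKmem : ∀ {p : EuclideanSpace ℝ (Fin n) × (Fin m → EuclideanSpace ℝ (Fin n))},
      p ∈ K → p.1 ∈ Metric.closedBall xbar r ∧ ∀ i, p.2 i ∈ Metric.closedBall xbar r :=
    fun hp => ⟨hp.1, fun i => hp.2 i (Set.mem_univ i)⟩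
  set W : ℕ → (EuclideanSpace ℝ (Fin n) × (Fin m → EuclideanSpace ℝ (Fin n))) → ℝ :=
    fun k p => φ₀ p.1 + ((k:ℝ)+1) * (∑ i, max (φ i (p.2 i)) 0 ^ 2)
      + ((k:ℝ)+1) * (∑ i, ‖p.2 i - p.1‖^2) + ‖p.1 - xbar‖^2 with hWdef
  have hWc : ∀ k, ContinuousOn (W k) K := by
    intro k
    apply ContinuousOn.add
    apply ContinuousOn.add
    apply ContinuousOn.add
    · exact ContinuousOn.comp hc0 continuous_fst.continuousOn
        (fun p hp => hsub12 (hKmem hp).1)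
    · apply ContinuousOn.mul continuousOn_const
      apply continuousOn_finset_sum
      intro i _
      apply ContinuousOn.pow
      apply ContinuousOn.sup _ continuousOn_const
      exact ContinuousOn.comp (hci i)
        (Continuous.continuousOn (by fun_prop :
          Continuous fun a : EuclideanSpace ℝ (Fin n) × (Fin m → EuclideanSpace ℝ (Fin n)) =>
            a.2 i))
        (fun p hp => hsub12 ((hKmem hp).2 i))
    · apply ContinuousOn.mul continuousOn_const
      apply continuousOn_finset_sum
      intro i _
      apply Continuous.continuousOn
      have : Continuous fun a : EuclideanSpace ℝ (Fin n) × (Fin m → EuclideanSpace ℝ (Fin n)) =>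
          a.2 i - a.1 := by fun_prop
      exact this.norm.pow 2
    · exact ((continuous_fst.sub continuous_const).norm.pow 2).continuousOn
  have hqK : ((xbar, fun _ => xbar) :
      EuclideanSpace ℝ (Fin n) × (Fin m → EuclideanSpace ℝ (Fin n))) ∈ K :=
    ⟨Metric.mem_closedBall_self hr.le, fun i _ => Metric.mem_closedBall_self hr.le⟩
  have hexmin : ∀ k, ∃ p ∈ K, IsMinOn (W k) K p := fun k =>
    hKcomp.exists_isMinOn ⟨_, hqK⟩ (hWc k)
  choose p hpK hpmin using hexmin
  have hp1K : ∀ k, (p k).1 ∈ Metric.closedBall xbar r := fun k => (hKmem (hpK k)).1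
  have hp2K : ∀ k i, (p k).2 i ∈ Metric.closedBall xbar r := fun k i => (hKmem (hpK k)).2 i
  have hWq : ∀ k, W k (xbar, fun _ => xbar) = φ₀ xbar := by
    intro k
    simp only [hWdef]
    have h1 : ∀ i : Fin m, max (φ i xbar) 0 ^ 2 = 0 := fun i => by
      rw [max_eq_right (hfeas i)]; ring
    rw [Finset.sum_congr rfl (fun i _ => h1 i)]
    simp
  have hA : ∀ k, W k (p k) ≤ φ₀ xbar := fun k => by rw [← hWq k]; exact hpmin k hqK
  have hk1pos : ∀ k : ℕ, (0:ℝ) < (k:ℝ)+1 := fun k => by positivity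
  have hφ₀low : ∀ k, φ₀ xbar - φ₀ ((p k).1) ≤ L * r := by
    intro k
    have h := hlip0' xbar (Metric.mem_closedBall_self (by linarith)) ((p k).1)
      (hsub12 (hp1K k))
    have hnb : ‖xbar - (p k).1‖ ≤ r := by
      rw [norm_sub_rev, ← dist_eq_norm]
      exact hp1K k
    calc φ₀ xbar - φ₀ ((p k).1) ≤ |φ₀ xbar - φ₀ ((p k).1)| := le_abs_self _
      _ ≤ L * ‖xbar - (p k).1‖ := h
      _ ≤ L * r := mul_le_mul_of_nonneg_left hnb hL
  have hSnn1 : ∀ k, (0:ℝ) ≤ ∑ i, max (φ i ((p k).2 i)) 0 ^2 :=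
    fun k => Finset.sum_nonneg fun i _ => sq_nonneg _
  have hSnn2 : ∀ k, (0:ℝ) ≤ ∑ i, ‖(p k).2 i - (p k).1‖^2 :=
    fun k => Finset.sum_nonneg fun i _ => sq_nonneg _
  have hbound : ∀ k : ℕ, ((k:ℝ)+1) * (∑ i, max (φ i ((p k).2 i)) 0 ^2) ≤ L*r
      ∧ ((k:ℝ)+1) * (∑ i, ‖(p k).2 i - (p k).1‖^2) ≤ L*r
      ∧ φ₀ ((p k).1) + ‖(p k).1 - xbar‖^2 ≤ φ₀ xbar := by
    intro k
    have hAk := hA k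
    simp only [hWdef] at hAk
    have h1 := hφ₀low k
    have h2 := mul_nonneg (hk1pos k).le (hSnn1 k)
    have h3 := mul_nonneg (hk1pos k).le (hSnn2 k)
    have h4 : (0:ℝ) ≤ ‖(p k).1 - xbar‖^2 := sq_nonneg _
    exact ⟨by linarith, by linarith, by linarith⟩
  -- first extraction
  obtain ⟨pstar, hpstarK, g, hgm, hgl⟩ := hKcomp.tendsto_subseq hpK
  have hg1 : Tendsto (fun j => (p (g j)).1) atTop (𝓝 pstar.1) :=
    (continuous_fst.tendsto pstar).comp hgl
  have hg2 : ∀ i, Tendsto (fun j => (p (g j)).2 i) atTop (𝓝 (pstar.2 i)) :=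
    fun i => (((continuous_apply i).comp continuous_snd).tendsto pstar).comp hgl
  have hglim0 : Tendsto (fun j : ℕ => L*r / (((g j : ℕ):ℝ)+1)) atTop (𝓝 0) := by
    have h1 : Tendsto (fun k : ℕ => L*r/((k:ℝ)+1)) atTop (𝓝 0) := by
      have h2 : Tendsto (fun k : ℕ => (L*r) * (1/((k:ℝ)+1))) atTop (𝓝 ((L*r) * 0)) :=
        tendsto_const_nhds.mul tendsto_one_div_add_atTop_nhds_zero_nat
      simpa [div_eq_mul_inv] using h2
    exact h1.comp hgm.tendsto_atTop
  have hpstar1 : pstar.1 ∈ Metric.closedBall xbar r := (hKmem hpstarK).1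
  have hpstar2 : ∀ i, pstar.2 i ∈ Metric.closedBall xbar r := fun i => (hKmem hpstarK).2 i
  have hdiff0 : ∀ i, pstar.2 i = pstar.1 := by
    intro i
    have hb : ∀ j, ‖(p (g j)).2 i - (p (g j)).1‖^2 ≤ L*r/(((g j : ℕ):ℝ)+1) := by
      intro j
      rw [le_div_iff₀ (hk1pos (g j))]
      have hsingle : ‖(p (g j)).2 i - (p (g j)).1‖^2 ≤ ∑ i', ‖(p (g j)).2 i' - (p (g j)).1‖^2 :=
        Finset.single_le_sum (f := fun i' => ‖(p (g j)).2 i' - (p (g j)).1‖^2)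
          (fun i' _ => sq_nonneg _) (Finset.mem_univ i)
      have := (hbound (g j)).2.1
      nlinarith [hk1pos (g j)]
    have hLHS : Tendsto (fun j => ‖(p (g j)).2 i - (p (g j)).1‖^2) atTop
        (𝓝 (‖pstar.2 i - pstar.1‖^2)) := (((hg2 i).sub hg1).norm).pow 2
    have hle := le_of_tendsto_of_tendsto' hLHS hglim0 hb
    have h0 : ‖pstar.2 i - pstar.1‖^2 = 0 := le_antisymm hle (sq_nonneg _)
    have h1 : ‖pstar.2 i - pstar.1‖ = 0 := by
      have := sq_nonneg (‖pstar.2 i - pstar.1‖)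
      nlinarith [norm_nonneg (pstar.2 i - pstar.1)]
    rw [norm_eq_zero, sub_eq_zero] at h1
    exact h1
  have hfeas_star : ∀ i, φ i pstar.1 ≤ 0 := by
    intro i
    have hb : ∀ j, max (φ i ((p (g j)).2 i)) 0 ^2 ≤ L*r/(((g j : ℕ):ℝ)+1) := by
      intro j
      rw [le_div_iff₀ (hk1pos (g j))]
      have hsingle : max (φ i ((p (g j)).2 i)) 0 ^2 ≤ ∑ i', max (φ i' ((p (g j)).2 i')) 0 ^2 :=
        Finset.single_le_sum (f := fun i' => max (φ i' ((p (g j)).2 i')) 0 ^2)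
          (fun i' _ => sq_nonneg _) (Finset.mem_univ i)
      have := (hbound (g j)).1
      nlinarith [hk1pos (g j)]
    have hLHS : Tendsto (fun j => max (φ i ((p (g j)).2 i)) 0 ^2) atTop
        (𝓝 (max (φ i (pstar.2 i)) 0 ^2)) := by
      have hφlim : Tendsto (fun j => φ i ((p (g j)).2 i)) atTop (𝓝 (φ i (pstar.2 i))) :=
        ((hcAti i _ (hpstar2 i)).tendsto).comp (hg2 i)
      exact ((hφlim.max tendsto_const_nhds).pow 2)
    have hle := le_of_tendsto_of_tendsto' hLHS hglim0 hb
    have h0 : max (φ i (pstar.2 i)) 0 = 0 := by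
      have h2 := le_max_right (φ i (pstar.2 i)) 0
      nlinarith [sq_nonneg (max (φ i (pstar.2 i)) 0)]
    have : φ i (pstar.2 i) ≤ 0 := by
      have := le_max_left (φ i (pstar.2 i)) 0
      rw [h0] at this; exact this
    rwa [hdiff0 i] at this
  have hp1star : pstar.1 = xbar := by
    have hlim1 : Tendsto (fun j => φ₀ ((p (g j)).1) + ‖(p (g j)).1 - xbar‖^2) atTop
        (𝓝 (φ₀ pstar.1 + ‖pstar.1 - xbar‖^2)) :=
      (((hcAt _ hpstar1).tendsto).comp hg1).add (((hg1.sub tendsto_const_nhds).norm).pow 2)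
    have hle : φ₀ pstar.1 + ‖pstar.1 - xbar‖^2 ≤ φ₀ xbar :=
      le_of_tendsto hlim1 (Filter.Eventually.of_forall fun j => (hbound (g j)).2.2)
    have hopt'' := hopt' pstar.1 (hsub12 hpstar1) hfeas_star
    have h1 : ‖pstar.1 - xbar‖ = 0 := by
      nlinarith [sq_nonneg (‖pstar.1 - xbar‖), norm_nonneg (pstar.1 - xbar)]
    rw [norm_eq_zero, sub_eq_zero] at h1
    exact h1
  -- eventual interiority
  have hg1' : Tendsto (fun j => (p (g j)).1) atTop (𝓝 xbar) := hp1star ▸ hg1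
  have hg2' : ∀ i, Tendsto (fun j => (p (g j)).2 i) atTop (𝓝 xbar) := fun i => by
    have h := hg2 i; rw [hdiff0 i, hp1star] at h; exact h
  have hev : ∀ᶠ j in atTop, dist ((p (g j)).1) xbar < r/2 ∧
      ∀ i, dist ((p (g j)).2 i) xbar < r/2 := by
    apply Filter.Eventually.and
    · exact Metric.tendsto_nhds.mp hg1' (r/2) (by positivity)
    · rw [eventually_all]
      exact fun i => Metric.tendsto_nhds.mp (hg2' i) (r/2) (by positivity)
  obtain ⟨N, hN⟩ := Filter.eventually_atTop.mp hev
  set u0 : ℕ → EuclideanSpace ℝ (Fin n) := fun j => (p (g (j + N))).1 with hu0def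
  set ui : ℕ → Fin m → EuclideanSpace ℝ (Fin n) := fun j i => (p (g (j + N))).2 i with huidef
  set c : ℕ → ℝ := fun j => ((g (j + N) : ℕ) : ℝ) + 1 with hcdef
  have hcpos : ∀ j, 0 < c j := fun j => hk1pos _
  have hu0b : ∀ j, dist (u0 j) xbar < r/2 := fun j => (hN _ (Nat.le_add_left N j)).1
  have huib : ∀ j i, dist (ui j i) xbar < r/2 := fun j i => (hN _ (Nat.le_add_left N j)).2 i
  -- ball inclusions
  have hball_in : ∀ y : EuclideanSpace ℝ (Fin n), dist y xbar < r/2 →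
      Metric.ball y (r/2) ⊆ Metric.closedBall xbar r := by
    intro y hy u hu
    rw [Metric.mem_ball] at hu
    rw [Metric.mem_closedBall]
    calc dist u xbar ≤ dist u y + dist y xbar := dist_triangle _ _ _
      _ ≤ r := by linarith
  -- local Lipschitz estimates around the stage-2 points
  have hlipb0 : ∀ j, ∀ u ∈ Metric.ball (u0 j) (r/2), |φ₀ u - φ₀ (u0 j)| ≤ L * ‖u - u0 j‖ := by
    intro j u hu
    exact hlip0' u (hsub12 (hball_in _ (hu0b j) hu)) (u0 j) (hsub12 (hp1K _))
  have hlipbi : ∀ j i, ∀ w ∈ Metric.ball (ui j i) (r/2),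
      |φ i w - φ i (ui j i)| ≤ L * ‖w - ui j i‖ := by
    intro j i w hw
    exact hlipi' i w (hsub12 (hball_in _ (huib j i) hw)) (ui j i) (hsub12 (hp2K _ i))
  -- first-block minimality
  have hblk0 : ∀ j, ∀ u ∈ Metric.ball (u0 j) (r/2),
      φ₀ (u0 j) + (c j) * (∑ i, ‖ui j i - u0 j‖^2) + ‖u0 j - xbar‖^2
        ≤ φ₀ u + (c j) * (∑ i, ‖ui j i - u‖^2) + ‖u - xbar‖^2 := by
    intro j u hu
    have humem : ((u, (p (g (j+N))).2) :
        EuclideanSpace ℝ (Fin n) × (Fin m → EuclideanSpace ℝ (Fin n))) ∈ K :=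
      ⟨hball_in _ (hu0b j) hu, fun i _ => hp2K _ i⟩
    have hm := hpmin (g (j+N)) humem
    simp only [hWdef] at hm
    have hm' : φ₀ (u0 j) + (c j) * (∑ i, max (φ i (ui j i)) 0 ^2)
        + (c j) * (∑ i, ‖ui j i - u0 j‖^2) + ‖u0 j - xbar‖^2
        ≤ φ₀ u + (c j) * (∑ i, max (φ i (ui j i)) 0 ^2)
        + (c j) * (∑ i, ‖ui j i - u‖^2) + ‖u - xbar‖^2 := hm
    linarith
  -- the candidate subgradient of φ₀
  set v0 : ℕ → EuclideanSpace ℝ (Fin n) :=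
    fun j => (∑ i, (2 * c j) • (ui j i - u0 j)) - (2:ℝ) • (u0 j - xbar) with hv0def
  have hv0mem : ∀ j, v0 j ∈ myFS φ₀ (u0 j) := by
    intro j
    apply mem_myFS_of_quad (C := c j * m + 1)
      (by positivity) (by positivity : (0:ℝ) < r/2)
    intro u hu
    have hb := hblk0 j u hu
    have hexp1 : ∀ i : Fin m, ‖ui j i - u‖^2
        = ‖ui j i - u0 j‖^2 + 2*⟪u0 j - ui j i, u - u0 j⟫ + ‖u - u0 j‖^2 := by
      intro i
      rw [norm_sub_rev (ui j i) u, norm_sub_rev (ui j i) (u0 j)]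
      exact norm_sub_sq_expand u (u0 j) (ui j i)
    have hsum1 : (∑ i, ‖ui j i - u‖^2) = (∑ i, ‖ui j i - u0 j‖^2)
        + 2 * (∑ i, ⟪u0 j - ui j i, u - u0 j⟫) + (m:ℝ) * ‖u - u0 j‖^2 := by
      rw [Finset.sum_congr rfl (fun i _ => hexp1 i), Finset.sum_add_distrib,
        Finset.sum_add_distrib, Finset.sum_const, Finset.card_univ, Fintype.card_fin,
        nsmul_eq_mul, Finset.mul_sum]
    have hexp2 : ‖u - xbar‖^2
        = ‖u0 j - xbar‖^2 + 2*⟪u0 j - xbar, u - u0 j⟫ + ‖u - u0 j‖^2 :=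
      norm_sub_sq_expand u (u0 j) xbar
    have hv0inner : ⟪v0 j, u - u0 j⟫
        = -((2 * c j) * (∑ i, ⟪u0 j - ui j i, u - u0 j⟫)) - 2*⟪u0 j - xbar, u - u0 j⟫ := by
      have e1 : ∀ i : Fin m, ⟪(2 * c j) • (ui j i - u0 j), u - u0 j⟫
          = -((2 * c j) * ⟪u0 j - ui j i, u - u0 j⟫) := by
        intro i
        rw [real_inner_smul_left, show ui j i - u0 j = -(u0 j - ui j i) by abel,
          inner_neg_left]
        ring
      calc ⟪v0 j, u - u0 j⟫
          = (∑ i, ⟪(2 * c j) • (ui j i - u0 j), u - u0 j⟫) - ⟪(2:ℝ) • (u0 j - xbar), u - u0 j⟫ := by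
            rw [hv0def, inner_sub_left, sum_inner]
        _ = (∑ i, -((2 * c j) * ⟪u0 j - ui j i, u - u0 j⟫)) - 2*⟪u0 j - xbar, u - u0 j⟫ := by
            rw [Finset.sum_congr rfl (fun i _ => e1 i), real_inner_smul_left]
        _ = -((2 * c j) * (∑ i, ⟪u0 j - ui j i, u - u0 j⟫)) - 2*⟪u0 j - xbar, u - u0 j⟫ := by
            rw [Finset.sum_neg_distrib, Finset.mul_sum]
    have hcb : c j * (∑ i, ‖ui j i - u‖^2) = c j * (∑ i, ‖ui j i - u0 j‖^2)
        + 2 * c j * (∑ i, ⟪u0 j - ui j i, u - u0 j⟫) + c j * m * ‖u - u0 j‖^2 := by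
      rw [hsum1]; ring
    rw [hv0inner]
    linarith [hb, hcb, hexp2]
  -- second-block minimality
  have hblki : ∀ j i, ∀ w ∈ Metric.ball (ui j i) (r/2),
      (c j) * max (φ i (ui j i)) 0 ^2 + (c j) * ‖ui j i - u0 j‖^2
        ≤ (c j) * max (φ i w) 0 ^2 + (c j) * ‖w - u0 j‖^2 := by
    intro j i w hw
    have hwK : Function.update (p (g (j+N))).2 i w ∈
        Set.univ.pi (fun _ : Fin m => Metric.closedBall xbar r) := by
      intro i' _
      by_cases h : i' = i
      · subst h; rw [Function.update_self]; exact hball_in _ (huib j i') hw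
      · rw [Function.update_of_ne h]; exact hp2K _ i'
    have hm := hpmin (g (j+N)) (⟨hp1K _, hwK⟩ :
      (((p (g (j+N))).1, Function.update (p (g (j+N))).2 i w) :
        EuclideanSpace ℝ (Fin n) × (Fin m → EuclideanSpace ℝ (Fin n))) ∈ K)
    simp only [hWdef] at hm
    have hm' : φ₀ ((p (g (j+N))).1)
        + (((g (j+N) : ℕ):ℝ)+1) * (∑ i', max (φ i' ((p (g (j+N))).2 i')) 0 ^2)
        + (((g (j+N) : ℕ):ℝ)+1) * (∑ i', ‖(p (g (j+N))).2 i' - (p (g (j+N))).1‖^2)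
        + ‖(p (g (j+N))).1 - xbar‖^2
        ≤ φ₀ ((p (g (j+N))).1)
        + (((g (j+N) : ℕ):ℝ)+1) * (∑ i', max (φ i' (Function.update (p (g (j+N))).2 i w i')) 0 ^2)
        + (((g (j+N) : ℕ):ℝ)+1) * (∑ i', ‖Function.update (p (g (j+N))).2 i w i' - (p (g (j+N))).1‖^2)
        + ‖(p (g (j+N))).1 - xbar‖^2 := hm
    clear hm
    have hupdf : (fun i' => max (φ i' (Function.update (p (g (j+N))).2 i w i')) 0 ^2)
        = Function.update (fun i' => max (φ i' ((p (g (j+N))).2 i')) 0 ^2) i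
            (max (φ i w) 0 ^2) := by
      funext i'
      by_cases h : i' = i
      · subst h; rw [Function.update_self, Function.update_self]
      · rw [Function.update_of_ne h, Function.update_of_ne h]
    have hupdg : (fun i' => ‖Function.update (p (g (j+N))).2 i w i' - (p (g (j+N))).1‖^2)
        = Function.update (fun i' => ‖(p (g (j+N))).2 i' - (p (g (j+N))).1‖^2) i
            (‖w - (p (g (j+N))).1‖^2) := by
      funext i'
      by_cases h : i' = i
      · subst h; rw [Function.update_self, Function.update_self]
      · rw [Function.update_of_ne h, Function.update_of_ne h]
    have hs1 : (∑ i', max (φ i' (Function.update (p (g (j+N))).2 i w i')) 0 ^2)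
        = max (φ i w) 0 ^2
          + ∑ i' ∈ Finset.univ \ {i}, max (φ i' ((p (g (j+N))).2 i')) 0 ^2 := by
      rw [show (fun i' => max (φ i' (Function.update (p (g (j+N))).2 i w i')) 0 ^2) =
        Function.update (fun i' => max (φ i' ((p (g (j+N))).2 i')) 0 ^2) i
          (max (φ i w) 0 ^2) from hupdf]
      exact Finset.sum_update_of_mem (Finset.mem_univ i) _ _
    have hs2 : (∑ i', ‖Function.update (p (g (j+N))).2 i w i' - (p (g (j+N))).1‖^2)
        = ‖w - (p (g (j+N))).1‖^2
          + ∑ i' ∈ Finset.univ \ {i}, ‖(p (g (j+N))).2 i' - (p (g (j+N))).1‖^2 := by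
      rw [show (fun i' => ‖Function.update (p (g (j+N))).2 i w i' - (p (g (j+N))).1‖^2) =
        Function.update (fun i' => ‖(p (g (j+N))).2 i' - (p (g (j+N))).1‖^2) i
          (‖w - (p (g (j+N))).1‖^2) from hupdg]
      exact Finset.sum_update_of_mem (Finset.mem_univ i) _ _
    have hb1 : (∑ i', max (φ i' ((p (g (j+N))).2 i')) 0 ^2)
        = max (φ i ((p (g (j+N))).2 i)) 0 ^2
          + ∑ i' ∈ Finset.univ \ {i}, max (φ i' ((p (g (j+N))).2 i')) 0 ^2 := by
      rw [← Finset.add_sum_erase _ _ (Finset.mem_univ i), Finset.erase_eq]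
    have hb2 : (∑ i', ‖(p (g (j+N))).2 i' - (p (g (j+N))).1‖^2)
        = ‖(p (g (j+N))).2 i - (p (g (j+N))).1‖^2
          + ∑ i' ∈ Finset.univ \ {i}, ‖(p (g (j+N))).2 i' - (p (g (j+N))).1‖^2 := by
      rw [← Finset.add_sum_erase _ _ (Finset.mem_univ i), Finset.erase_eq]
    rw [hs1, hs2, hb1, hb2] at hm'
    have hcj : (0:ℝ) < ((g (j+N) : ℕ):ℝ)+1 := hk1pos _
    have hraw : (((g (j+N) : ℕ):ℝ)+1) * max (φ i ((p (g (j+N))).2 i)) 0 ^2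
        + (((g (j+N) : ℕ):ℝ)+1) * ‖(p (g (j+N))).2 i - (p (g (j+N))).1‖^2
        ≤ (((g (j+N) : ℕ):ℝ)+1) * max (φ i w) 0 ^2
        + (((g (j+N) : ℕ):ℝ)+1) * ‖w - (p (g (j+N))).1‖^2 := by nlinarith [hm']
    exact hraw
  -- multipliers and candidate subgradients
  set α : ℕ → Fin m → ℝ := fun j i => 2 * c j * max (φ i (ui j i)) 0 with hαdef
  set vi : ℕ → Fin m → EuclideanSpace ℝ (Fin n) := fun j i =>
    if 0 < φ i (ui j i) then (φ i (ui j i))⁻¹ • (u0 j - ui j i) else 0 with hvidef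
  have hα0 : ∀ j i, 0 ≤ α j i := fun j i =>
    mul_nonneg (mul_nonneg (by norm_num) (hcpos j).le) (le_max_right _ _)
  have hαvi : ∀ j i, α j i • vi j i = (2 * c j) • (u0 j - ui j i) := by
    intro j i
    by_cases h : 0 < φ i (ui j i)
    · show (2 * c j * max (φ i (ui j i)) 0) •
        (if 0 < φ i (ui j i) then (φ i (ui j i))⁻¹ • (u0 j - ui j i) else 0) = _
      rw [if_pos h, max_eq_left h.le, smul_smul]
      congr 1
      field_simp
    · push_neg at h
      show (2 * c j * max (φ i (ui j i)) 0) •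
        (if 0 < φ i (ui j i) then (φ i (ui j i))⁻¹ • (u0 j - ui j i) else 0) = _
      rw [if_neg (not_lt.mpr h), smul_zero]
      have hz := inactive_block (hcpos j) (by positivity : (0:ℝ) < r/2) hL h
        (hlipbi j i) (hblki j i)
      rw [← hz, sub_self, smul_zero]
  have hvimem : ∀ j i, 0 < φ i (ui j i) → vi j i ∈ myFS (φ i) (ui j i) := by
    intro j i h
    show (if 0 < φ i (ui j i) then (φ i (ui j i))⁻¹ • (u0 j - ui j i) else 0) ∈ _
    rw [if_pos h]
    exact active_block (hcpos j) (by positivity) hL h (hlipbi j i) (hblki j i)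
  have hvinorm : ∀ j i, ‖vi j i‖ ≤ L := by
    intro j i
    by_cases h : 0 < φ i (ui j i)
    · exact myFS_norm_le (by positivity) hL (hlipbi j i) (hvimem j i h)
    · show ‖(if 0 < φ i (ui j i) then (φ i (ui j i))⁻¹ • (u0 j - ui j i) else 0)‖ ≤ L
      rw [if_neg h, norm_zero]; exact hL
  have hv0norm : ∀ j, ‖v0 j‖ ≤ L :=
    fun j => myFS_norm_le (by positivity) hL (hlipb0 j) (hv0mem j)
  -- the stationarity identity
  have hid : ∀ j, v0 j + (∑ i, α j i • vi j i) + (2:ℝ) • (u0 j - xbar) = 0 := by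
    intro j
    rw [Finset.sum_congr rfl (fun i _ => hαvi j i), hv0def]
    have hz : (∑ i, (2 * c j) • (ui j i - u0 j)) + (∑ i, (2 * c j) • (u0 j - ui j i)) = 0 := by
      rw [← Finset.sum_add_distrib]
      apply Finset.sum_eq_zero
      intro i _
      rw [← smul_add, show ui j i - u0 j + (u0 j - ui j i) = 0 by abel, smul_zero]
    have hre : (∑ i, (2 * c j) • (ui j i - u0 j)) - (2:ℝ) • (u0 j - xbar)
        + (∑ i, (2 * c j) • (u0 j - ui j i)) + (2:ℝ) • (u0 j - xbar)
        = (∑ i, (2 * c j) • (ui j i - u0 j)) + (∑ i, (2 * c j) • (u0 j - ui j i)) := by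
      abel
    rw [hre, hz]
  -- normalization
  set σ : ℕ → ℝ := fun j => 1 + ∑ i, α j i with hσdef
  have hσ1 : ∀ j, 1 ≤ σ j := fun j => by
    have h := Finset.sum_nonneg fun i (_ : i ∈ Finset.univ) => hα0 j i
    simp only [hσdef]; linarith
  have hσpos : ∀ j, 0 < σ j := fun j => lt_of_lt_of_le one_pos (hσ1 j)
  set lam0 : ℕ → ℝ := fun j => (σ j)⁻¹ with hlam0def
  set lam : ℕ → Fin m → ℝ := fun j i => α j i / σ j with hlamdef
  have hlam0mem : ∀ j, lam0 j ∈ Set.Icc (0:ℝ) 1 := by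
    intro j
    constructor
    · exact inv_nonneg.2 (hσpos j).le
    · show (σ j)⁻¹ ≤ 1
      rw [← one_div, div_le_one (hσpos j)]
      exact hσ1 j
  have hlammem : ∀ j i, lam j i ∈ Set.Icc (0:ℝ) 1 := by
    intro j i
    constructor
    · exact div_nonneg (hα0 j i) (hσpos j).le
    · show α j i / σ j ≤ 1
      rw [div_le_one (hσpos j)]
      have hle : α j i ≤ ∑ i', α j i' :=
        Finset.single_le_sum (f := fun i' => α j i') (fun i' _ => hα0 j i') (Finset.mem_univ i)
      simp only [hσdef]; linarith
  have hsum1 : ∀ j, lam0 j + ∑ i, lam j i = 1 := by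
    intro j
    show (σ j)⁻¹ + ∑ i, α j i / σ j = 1
    rw [← Finset.sum_div, inv_eq_one_div, ← add_div,
      div_eq_one_iff_eq (hσpos j).ne']
  have hidn : ∀ j, lam0 j • v0 j + ∑ i, lam j i • vi j i
      = -((((σ j)⁻¹) * 2) • (u0 j - xbar)) := by
    intro j
    have h := congrArg (fun x : EuclideanSpace ℝ (Fin n) => (σ j)⁻¹ • x) (hid j)
    simp only [smul_add, smul_zero, Finset.smul_sum, smul_smul] at h
    have he : ∀ i, ((σ j)⁻¹ * α j i) • vi j i = lam j i • vi j i := fun i => by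
      show _ = (α j i / σ j) • vi j i
      rw [div_eq_mul_inv, mul_comm]
    rw [Finset.sum_congr rfl (fun i _ => he i)] at h
    exact eq_neg_of_add_eq_zero_left h
  have hu0lim : Tendsto u0 atTop (𝓝 xbar) := hg1'.comp (tendsto_add_atTop_nat N)
  have huilim : ∀ i, Tendsto (fun j => ui j i) atTop (𝓝 xbar) :=
    fun i => (hg2' i).comp (tendsto_add_atTop_nat N)
  -- second extraction
  set S : Set (ℝ × (Fin m → ℝ) × EuclideanSpace ℝ (Fin n) × (Fin m → EuclideanSpace ℝ (Fin n))) :=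
    Set.Icc (0:ℝ) 1 ×ˢ ((Set.univ.pi fun _ : Fin m => Set.Icc (0:ℝ) 1) ×ˢ
      (Metric.closedBall (0 : EuclideanSpace ℝ (Fin n)) L ×ˢ
        Set.univ.pi fun _ : Fin m => Metric.closedBall (0 : EuclideanSpace ℝ (Fin n)) L))
    with hSdef
  have hScomp : IsCompact S := (isCompact_Icc).prod
    ((isCompact_univ_pi fun _ => isCompact_Icc).prod
      ((isCompact_closedBall _ _).prod (isCompact_univ_pi fun _ => isCompact_closedBall _ _)))
  set ζ : ℕ → ℝ × (Fin m → ℝ) × EuclideanSpace ℝ (Fin n) × (Fin m → EuclideanSpace ℝ (Fin n)) :=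
    fun j => (lam0 j, lam j, v0 j, vi j) with hζdef
  have hζS : ∀ j, ζ j ∈ S := fun j =>
    ⟨hlam0mem j, ⟨fun i _ => hlammem j i,
      ⟨mem_closedBall_zero_iff.2 (hv0norm j), fun i _ => mem_closedBall_zero_iff.2 (hvinorm j i)⟩⟩⟩
  obtain ⟨zlim, hzS, g2, hg2m, hg2l⟩ := hScomp.tendsto_subseq hζS
  have ht0 : Tendsto (fun t => lam0 (g2 t)) atTop (𝓝 zlim.1) :=
    (continuous_fst.tendsto _).comp hg2l
  have htlam : ∀ i, Tendsto (fun t => lam (g2 t) i) atTop (𝓝 (zlim.2.1 i)) := fun i =>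
    (((continuous_apply i).comp (continuous_fst.comp continuous_snd)).tendsto _).comp hg2l
  have htv0 : Tendsto (fun t => v0 (g2 t)) atTop (𝓝 zlim.2.2.1) :=
    ((continuous_fst.comp (continuous_snd.comp continuous_snd)).tendsto _).comp hg2l
  have htvi : ∀ i, Tendsto (fun t => vi (g2 t) i) atTop (𝓝 (zlim.2.2.2 i)) := fun i =>
    (((continuous_apply i).comp
      (continuous_snd.comp (continuous_snd.comp continuous_snd))).tendsto _).comp hg2l
  have hl0nn : 0 ≤ zlim.1 := hzS.1.1
  have hlamnn : ∀ i, 0 ≤ zlim.2.1 i := fun i => (hzS.2.1 i (Set.mem_univ i)).1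
  -- the multipliers sum to one
  have hsumlim : zlim.1 + ∑ i, zlim.2.1 i = 1 := by
    have hLHS : Tendsto (fun t => lam0 (g2 t) + ∑ i, lam (g2 t) i) atTop
        (𝓝 (zlim.1 + ∑ i, zlim.2.1 i)) :=
      ht0.add (tendsto_finset_sum _ fun i _ => htlam i)
    have hconst : (fun t => lam0 (g2 t) + ∑ i, lam (g2 t) i) = fun _ => (1:ℝ) :=
      funext fun t => hsum1 (g2 t)
    rw [hconst] at hLHS
    exact tendsto_nhds_unique hLHS tendsto_const_nhds
  -- the limiting stationarity identity
  have hu0g2 : Tendsto (fun t => u0 (g2 t)) atTop (𝓝 xbar) := hu0lim.comp hg2m.tendsto_atTop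
  have hfinal : zlim.1 • zlim.2.2.1 + ∑ i, zlim.2.1 i • zlim.2.2.2 i = 0 := by
    have hLHS : Tendsto (fun t => lam0 (g2 t) • v0 (g2 t) + ∑ i, lam (g2 t) i • vi (g2 t) i)
        atTop (𝓝 (zlim.1 • zlim.2.2.1 + ∑ i, zlim.2.1 i • zlim.2.2.2 i)) :=
      (ht0.smul htv0).add (tendsto_finset_sum _ fun i _ => (htlam i).smul (htvi i))
    have hre : (fun t => lam0 (g2 t) • v0 (g2 t) + ∑ i, lam (g2 t) i • vi (g2 t) i)
        = fun t => -((((σ (g2 t))⁻¹) * 2) • (u0 (g2 t) - xbar)) :=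
      funext fun t => hidn (g2 t)
    rw [hre] at hLHS
    have hRHS : Tendsto (fun t => -((((σ (g2 t))⁻¹) * 2) • (u0 (g2 t) - xbar))) atTop (𝓝 0) := by
      have hb : ∀ t, ‖-((((σ (g2 t))⁻¹) * 2) • (u0 (g2 t) - xbar))‖
          ≤ 2 * ‖u0 (g2 t) - xbar‖ := by
        intro t
        rw [norm_neg, norm_smul, Real.norm_eq_abs,
          abs_of_nonneg (by positivity : (0:ℝ) ≤ ((σ (g2 t))⁻¹) * 2)]
        apply mul_le_mul_of_nonneg_right _ (norm_nonneg _)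
        have h1 : (σ (g2 t))⁻¹ ≤ 1 := (hlam0mem (g2 t)).2
        linarith
      have hg0 : Tendsto (fun t => 2 * ‖u0 (g2 t) - xbar‖) atTop (𝓝 0) := by
        have h2 : Tendsto (fun t => ‖u0 (g2 t) - xbar‖) atTop (𝓝 0) :=
          tendsto_iff_norm_sub_tendsto_zero.mp hu0g2
        have h3 := h2.const_mul (2:ℝ)
        simpa using h3
      exact squeeze_zero_norm hb hg0
    exact tendsto_nhds_unique hLHS hRHS
  -- membership of the limit subgradients
  have hv0smem : zlim.2.2.1 ∈ basicSubdiffR φ₀ xbar :=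
    myFS_lim_mem (hcAt xbar (Metric.mem_closedBall_self hr.le))
      (fun t => u0 (g2 t)) (fun t => v0 (g2 t)) hu0g2 htv0 (fun t => hv0mem (g2 t))
  have hkey : ∀ i, zlim.2.1 i ≠ 0 →
      zlim.2.2.2 i ∈ basicSubdiffR (φ i) xbar ∧ φ i xbar = 0 := by
    intro i hne
    have hipos : 0 < zlim.2.1 i := lt_of_le_of_ne (hlamnn i) (Ne.symm hne)
    have hev2 : ∀ᶠ t in atTop, 0 < lam (g2 t) i :=
      (htlam i).eventually (eventually_gt_nhds hipos)
    obtain ⟨N2, hN2⟩ := Filter.eventually_atTop.mp hev2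
    have hφpos : ∀ t, 0 < φ i (ui (g2 (t + N2)) i) := by
      intro t
      have h2 := hN2 (t + N2) (Nat.le_add_left _ _)
      have h3 : 0 < α (g2 (t + N2)) i := by
        have h4 : (0:ℝ) < lam (g2 (t+N2)) i * σ (g2 (t+N2)) := mul_pos h2 (hσpos _)
        have h5 : lam (g2 (t+N2)) i * σ (g2 (t+N2)) = α (g2 (t+N2)) i := by
          show α (g2 (t+N2)) i / σ (g2 (t+N2)) * σ (g2 (t+N2)) = _
          exact div_mul_cancel₀ _ (hσpos _).ne'
        rwa [h5] at h4
    -- α = 2 c max(φ, 0) > 0 forces φ > 0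
      have h6 : 0 < max (φ i (ui (g2 (t + N2)) i)) 0 := by
        by_contra h7
        push_neg at h7
        have h8 : α (g2 (t+N2)) i ≤ 0 := by
          show 2 * c (g2 (t+N2)) * max (φ i (ui (g2 (t+N2)) i)) 0 ≤ 0
          apply mul_nonpos_of_nonneg_of_nonpos _ h7
          positivity
        linarith
      by_contra h9
      push_neg at h9
      rw [max_eq_right h9] at h6
      exact lt_irrefl _ h6
    constructor
    · exact myFS_lim_mem (hcAti i xbar (Metric.mem_closedBall_self hr.le))
        (fun t => ui (g2 (t + N2)) i) (fun t => vi (g2 (t + N2)) i)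
        ((huilim i).comp (hg2m.tendsto_atTop.comp (tendsto_add_atTop_nat N2)))
        ((htvi i).comp (tendsto_add_atTop_nat N2))
        (fun t => hvimem _ i (hφpos t))
    · have hφlim : Tendsto (fun t => φ i (ui (g2 (t + N2)) i)) atTop (𝓝 (φ i xbar)) :=
        ((hcAti i xbar (Metric.mem_closedBall_self hr.le)).tendsto).comp
          ((huilim i).comp (hg2m.tendsto_atTop.comp (tendsto_add_atTop_nat N2)))
      have hge : 0 ≤ φ i xbar := ge_of_tendsto' hφlim (fun t => (hφpos t).le)
      exact le_antisymm (hfeas i) hge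
  -- assemble the conclusion
  refine ⟨zlim.1, zlim.2.1, ⟨hl0nn, hlamnn⟩, ?_, ?_, ?_⟩
  · rw [hsumlim]; exact one_ne_zero
  · intro i
    by_cases h : zlim.2.1 i = 0
    · rw [h]; ring
    · rw [(hkey i h).2]; ring
  · refine ⟨zlim.2.2.1, fun i => if zlim.2.1 i = 0
      then (basicSubdiffR_nonempty (hlip i)).choose else zlim.2.2.2 i, hv0smem, ?_, ?_⟩
    · intro i
      by_cases h : zlim.2.1 i = 0
      · simp only [if_pos h]; exact (basicSubdiffR_nonempty (hlip i)).choose_spec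
      · simp only [if_neg h]; exact (hkey i h).1
    · have hre : (∑ i, zlim.2.1 i • (if zlim.2.1 i = 0
          then (basicSubdiffR_nonempty (hlip i)).choose else zlim.2.2.2 i))
          = ∑ i, zlim.2.1 i • zlim.2.2.2 i := by
        apply Finset.sum_congr rfl
        intro i _
        by_cases h : zlim.2.1 i = 0
        · rw [h, zero_smul, zero_smul]
        · rw [if_neg h]
      rw [hre]
      exact hfinal


end
end

section
/- Let (x̄,ȳ) be a feasible solution to problem (P) at which (P) is partially calm with constant κ > 0, and let ψ be continuous at (x̄,ȳ). Then (x̄,ȳ) is a local optimal solution to the penalized problem: minimize ψ(x,y) + κ(φ(x,y) − ϑ(x)) subject to gⱼ(x) ≤ 0 for j = 1,…,s and fᵢ(x,y) ≤ 0 for i = 1,…,r. -/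
open Filter Topology RealInnerProductSpace

noncomputable section

variable {E Y : Type*}

/-- Partial calmness yields local optimality in the penalized problem. -/
theorem partial_calmness_penalization {n m r s : ℕ}
    (φ ψ : EuclideanSpace ℝ (Fin n) × EuclideanSpace ℝ (Fin m) → ℝ) (f : Fin r → EuclideanSpace ℝ (Fin n) × EuclideanSpace ℝ (Fin m) → ℝ) (g : Fin s → EuclideanSpace ℝ (Fin n) → ℝ)
    (xbar : EuclideanSpace ℝ (Fin n)) (ybar : EuclideanSpace ℝ (Fin m)) (κ : ℝ) (hκ : 0 < κ)
    (hfeas : FeasibleP φ f g xbar ybar)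
    (hcalm : PartiallyCalm φ ψ f g xbar ybar κ)
    (hcont : ContinuousAt ψ (xbar, ybar)) :
    LocalOptPen φ ψ f g xbar ybar κ := by
  classical
  obtain ⟨U, hU, hcalm⟩ := hcalm
  rw [nhds_prod_eq, nhds_prod_eq] at hU
  obtain ⟨A, hA, BC, hBC, hsub⟩ := Filter.mem_prod_iff.mp hU
  obtain ⟨B, hB, C, hC, hsub2⟩ := Filter.mem_prod_iff.mp hBC
  obtain ⟨δ, hδ, hball⟩ := Metric.mem_nhds_iff.mp hC
  have hψ := Metric.tendsto_nhds.mp hcont (κ * δ) (mul_pos hκ hδ)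
  obtain ⟨W, hW, hWψ⟩ := Filter.eventually_iff_exists_mem.mp hψ
  have hv : valueFn φ (lowerF f) xbar = ((φ (xbar, ybar) : ℝ) : EReal) :=
    le_antisymm (sInf_le ⟨ybar, hfeas.2.1, rfl⟩) hfeas.2.2
  refine ⟨(A ×ˢ B) ∩ W, Filter.inter_mem (by rw [nhds_prod_eq]; exact Filter.prod_mem_prod hA hB) hW, ?_⟩
  rintro ⟨px, py⟩ ⟨⟨hpA, hpB⟩, hpW⟩ hg hf
  rw [hv, ← EReal.coe_sub, sub_self]
  simp only [EReal.coe_zero, mul_zero, add_zero]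
  have hle : valueFn φ (lowerF f) px ≤ ((φ (px, py) : ℝ) : EReal) := sInf_le ⟨py, hf, rfl⟩
  by_cases hbot : valueFn φ (lowerF f) px = ⊥
  · rw [hbot, EReal.sub_bot (EReal.coe_ne_bot _),
      EReal.mul_top_of_pos (by exact_mod_cast hκ), EReal.add_top_of_ne_bot (EReal.coe_ne_bot _)]
    exact le_top
  · have htop : valueFn φ (lowerF f) px ≠ ⊤ := (hle.trans_lt (EReal.coe_lt_top _)).ne
    lift valueFn φ (lowerF f) px to ℝ using ⟨htop, hbot⟩ with c hc
    have hcle : c ≤ φ (px, py) := EReal.coe_le_coe_iff.mp hle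
    set ν : ℝ := c - φ (px, py) with hνdef
    have hν : ν ≤ 0 := sub_nonpos.mpr hcle
    have habs : |ν| = φ (px, py) - c := by rw [abs_of_nonpos hν]; ring
    have key : ψ (xbar, ybar) ≤ ψ (px, py) + κ * (φ (px, py) - c) := by
      by_cases hsmall : |ν| < δ
      · have hmem : ((px, py, ν) : _ × _ × ℝ) ∈ U := by
          apply hsub
          refine ⟨hpA, hsub2 ⟨hpB, hball ?_⟩⟩
          simpa [Real.dist_eq] using hsmall
        have := hcalm (px, py, ν) hmem hg hf (by
          show ((φ (px, py) + ν : ℝ) : EReal) = _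
          rw [← hc]
          norm_cast
          ring)
        rw [habs] at this
        exact this
      · have h1 : ψ (xbar, ybar) - ψ (px, py) < κ * δ := by
          have := hWψ _ hpW
          rw [Real.dist_eq] at this
          calc ψ (xbar, ybar) - ψ (px, py) ≤ |ψ (px, py) - ψ (xbar, ybar)| := by
                rw [abs_sub_comm]; exact le_abs_self _
            _ < κ * δ := this
        have h2 : κ * δ ≤ κ * (φ (px, py) - c) := by
          rw [← habs]
          exact mul_le_mul_of_nonneg_left (not_lt.mp hsmall) hκ.le
        linarith
    rw [← EReal.coe_sub, ← EReal.coe_mul, ← EReal.coe_add]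
    exact_mod_cast key

end
end

section
/- Let (x̄,ȳ) be feasible to problem (P) and suppose that for some constant κ > 0 it is a local optimal solution to the penalized problem: minimize ψ(x,y) + κ(φ(x,y) − ϑ(x)) subject to gⱼ(x) ≤ 0 for j = 1,…,s and fᵢ(x,y) ≤ 0 for i = 1,…,r. Then (P) is partially calm at (x̄,ȳ). -/
open Filter Topology RealInnerProductSpace

noncomputable section

variable {E Y : Type*}

/-- Local optimality in the penalized problem yields partial calmness. -/
theorem penalization_partial_calmness {n m r s : ℕ}
    (φ ψ : EuclideanSpace ℝ (Fin n) × EuclideanSpace ℝ (Fin m) → ℝ) (f : Fin r → EuclideanSpace ℝ (Fin n) × EuclideanSpace ℝ (Fin m) → ℝ) (g : Fin s → EuclideanSpace ℝ (Fin n) → ℝ)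
    (xbar : EuclideanSpace ℝ (Fin n)) (ybar : EuclideanSpace ℝ (Fin m)) (κ : ℝ) (hκ : 0 < κ)
    (hfeas : FeasibleP φ f g xbar ybar)
    (hpen : LocalOptPen φ ψ f g xbar ybar κ) :
    ∃ κ' > 0, PartiallyCalm φ ψ f g xbar ybar κ' := by
  obtain ⟨hg, hf, hle⟩ := hfeas
  obtain ⟨U, hU, hUopt⟩ := hpen
  -- ϑ(x̄) = φ(x̄,ȳ)
  have hmem : ybar ∈ lowerF f xbar := hf
  have hge : valueFn φ (lowerF f) xbar ≤ ((φ (xbar, ybar) : ℝ) : EReal) :=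
    sInf_le ⟨ybar, hmem, rfl⟩
  have heq : valueFn φ (lowerF f) xbar = ((φ (xbar, ybar) : ℝ) : EReal) :=
    le_antisymm hge hle
  refine ⟨κ, hκ, (fun a : EuclideanSpace ℝ (Fin n) × EuclideanSpace ℝ (Fin m) × ℝ =>
      ((a.1, a.2.1) : EuclideanSpace ℝ (Fin n) × EuclideanSpace ℝ (Fin m))) ⁻¹' U, ?_, ?_⟩
  · exact (continuous_fst.prodMk (continuous_fst.comp continuous_snd)).continuousAt
      |>.preimage_mem_nhds hU
  · rintro ⟨x, y, ν⟩ ha hga hfa hval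
    have hkey := hUopt (x, y) ha hga hfa
    have hL : ((ψ (xbar, ybar) : ℝ) : EReal) +
        (κ : EReal) * (((φ (xbar, ybar) : ℝ) : EReal) - valueFn φ (lowerF f) xbar)
        = ((ψ (xbar, ybar) : ℝ) : EReal) := by
      rw [heq, ← EReal.coe_sub, sub_self]
      simp
    have hR : ((ψ (x, y) : ℝ) : EReal) +
        (κ : EReal) * (((φ (x, y) : ℝ) : EReal) - valueFn φ (lowerF f) x)
        = ((ψ (x, y) + κ * (-ν) : ℝ) : EReal) := by
      rw [← hval, ← EReal.coe_sub, ← EReal.coe_mul, ← EReal.coe_add]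
      norm_num
    rw [hL, hR] at hkey
    have hreal : ψ (xbar, ybar) ≤ ψ (x, y) + κ * (-ν) := by
      exact_mod_cast hkey
    have habs : -ν ≤ |ν| := neg_le_abs ν
    nlinarith [abs_nonneg ν]

end
end
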